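/- arXiv:1803.03170 — 6 statements merged into one kernel-verified Lean document; each statement's English description precedes it below -/
import Mathlib

section
/- Let $\nu > 0$ and $\mu > -1$. Then for all $t \in \mathbb{N}_a$, $\nabla_a^{-\nu}\big((t-a)^{\overline{\mu}}\big) = \frac{\Gamma(\mu+1)}{\Gamma(\mu+\nu+1)}(t-a)^{\overline{\mu+\nu}}$ (the fractional power rule for nabla sums). -/
open Filter Finset

/-- Generalized rising function `x^{\overline r} = Γ(x+r)/Γ(x)` (with the usual
vanishing convention, since `Real.Gamma` vanishes at nonpositive integers and
division by zero is zero in Lean). -/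
noncomputable def rfac (x r : ℝ) : ℝ := Real.Gamma (x + r) / Real.Gamma x

/-- Backward (nabla) difference. -/
def nbl (f : ℤ → ℝ) (t : ℤ) : ℝ := f t - f (t - 1)

/-- The `ν`-th order nabla fractional sum based at `a`. -/
noncomputable def nsum (ν : ℝ) (a : ℤ) (f : ℤ → ℝ) (t : ℤ) : ℝ :=
  (1 / Real.Gamma ν) * ∑ s ∈ Finset.Icc (a + 1) t, rfac ((t : ℝ) - (s : ℝ) + 1) (ν - 1) * f s

/-- The `ν`-th order nabla fractional difference based at `a`, for `0 < ν < 1`. -/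
noncomputable def ndiff (ν : ℝ) (a : ℤ) (f : ℤ → ℝ) (t : ℤ) : ℝ :=
  nbl (nsum (1 - ν) a f) t

/-- Rising factorial with natural exponent, as a finite product. -/
noncomputable def asc (x : ℝ) (k : ℕ) : ℝ := ∏ i ∈ range k, (x + i)

lemma asc_zero (x : ℝ) : asc x 0 = 1 := by simp [asc]

lemma asc_succ (x : ℝ) (k : ℕ) : asc x (k+1) = asc x k * (x + k) := by
  simp [asc, Finset.prod_range_succ]

lemma gamma_asc (x : ℝ) (hx : 0 < x) (k : ℕ) :
    Real.Gamma (x + k) = asc x k * Real.Gamma x := by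
  induction k with
  | zero => simp [asc_zero]
  | succ k ih =>
      have h2 : (x + k : ℝ) ≠ 0 := by positivity
      push_cast
      rw [show x + ((k:ℝ)+1) = (x + k) + 1 by ring, Real.Gamma_add_one h2]
      push_cast at ih
      rw [ih, asc_succ]
      ring

/-- Vandermonde convolution for rising factorials. -/
lemma vandermonde (x y : ℝ) : ∀ m : ℕ,
    ∑ j ∈ range (m+1), (m.choose j : ℝ) * asc x (m - j) * asc y j = asc (x+y) m := by
  intro m
  induction m with
  | zero => simp [asc_zero]
  | succ m ih =>
      rw [asc_succ, ← ih, Finset.sum_mul]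
      have split : ∀ j ∈ range (m+1),
          (m.choose j : ℝ) * asc x (m - j) * asc y j * ((x+y)+m)
            = (m.choose j : ℝ) * asc x (m - j + 1) * asc y j
              + (m.choose j : ℝ) * asc x (m - j) * asc y (j+1) := by
        intro j hj
        have hj' : j ≤ m := Nat.lt_succ_iff.mp (mem_range.mp hj)
        have hc : ((x+y)+(m:ℝ)) = (x + ((m - j : ℕ):ℝ)) + (y + j) := by
          have : ((m - j : ℕ) : ℝ) = (m : ℝ) - j := by
            push_cast [Nat.cast_sub hj']; ring
          rw [this]; ring
        rw [hc, asc_succ, asc_succ]; ring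
      rw [Finset.sum_congr rfl split, Finset.sum_add_distrib]
      rw [Finset.sum_range_succ' (fun j => ((m+1).choose j : ℝ) * asc x (m+1-j) * asc y j)]
      have pascal : ∀ j ∈ range (m+1),
          (((m+1).choose (j+1) : ℕ) : ℝ) * asc x (m+1-(j+1)) * asc y (j+1)
            = (m.choose j : ℝ) * asc x (m - j) * asc y (j+1)
              + (m.choose (j+1) : ℝ) * asc x (m - j) * asc y (j+1) := by
        intro j hj
        rw [Nat.choose_succ_succ, Nat.succ_sub_succ]
        push_cast; ring
      rw [Finset.sum_congr rfl pascal, Finset.sum_add_distrib]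
      have first : ∑ j ∈ range (m+1), (m.choose j : ℝ) * asc x (m - j + 1) * asc y j
          = (∑ j ∈ range (m+1), (m.choose (j+1) : ℝ) * asc x (m - j) * asc y (j+1))
            + ((m+1).choose 0 : ℝ) * asc x (m+1-0) * asc y 0 := by
        rw [Finset.sum_range_succ (fun j => (m.choose (j+1) : ℝ) * asc x (m - j) * asc y (j+1))]
        rw [Finset.sum_range_succ' (fun j => (m.choose j : ℝ) * asc x (m - j + 1) * asc y j)]
        have h0 : ∀ j ∈ range m, (m.choose (j+1) : ℝ) * asc x (m - (j+1) + 1) * asc y (j+1)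
            = (m.choose (j+1) : ℝ) * asc x (m - j) * asc y (j+1) := by
          intro j hj
          have : m - (j+1) + 1 = m - j := by
            have := mem_range.mp hj; omega
          rw [this]
        rw [Finset.sum_congr rfl h0]
        simp [Nat.choose_succ_self, asc_zero]
      rw [first]; ring

lemma rfac_eq (x : ℝ) (hx : 0 < x) (k : ℕ) :
    rfac ((k:ℝ)+1) (x-1) = asc x k * Real.Gamma x / (k.factorial : ℝ) := by
  unfold rfac
  rw [show ((k:ℝ)+1) + (x-1) = x + k by ring, gamma_asc x hx k,
    show ((k:ℝ)+1) = ((k:ℕ):ℝ) + 1 by push_cast; ring, Real.Gamma_nat_eq_factorial]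

lemma sum_Icc_reindex (f : ℤ → ℝ) (a : ℤ) (n : ℕ) :
    ∑ s ∈ Finset.Icc (a+1) (a+n), f s = ∑ j ∈ range n, f (a+1+j) := by
  induction n with
  | zero => simp
  | succ n ih =>
      have hins : Finset.Icc (a+1) (a+(n+1:ℕ)) = insert (a+n+1) (Finset.Icc (a+1) (a+n)) := by
        ext x; simp only [Finset.mem_Icc, Finset.mem_insert]; push_cast; omega
      have hnot : (a+n+1) ∉ Finset.Icc (a+1) (a+(n:ℕ)) := by
        simp only [Finset.mem_Icc]; omega
      rw [hins, Finset.sum_insert hnot, ih, Finset.sum_range_succ]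
      push_cast
      rw [show a + 1 + (n:ℤ) = a + (n:ℤ) + 1 by ring]
      ring

lemma key (ν μ : ℝ) (hν : 0 < ν) (hμ1 : 0 < μ + 1) (m : ℕ) :
    (1 / Real.Gamma ν) *
      ∑ j ∈ range (m+1), rfac (((m-j:ℕ):ℝ)+1) (ν-1) * rfac ((j:ℝ)+1) μ
    = Real.Gamma (μ+1) / Real.Gamma (μ+ν+1) * rfac ((m:ℝ)+1) (μ+ν) := by
  have hμν : 0 < μ + ν + 1 := by linarith
  have hΓν : Real.Gamma ν ≠ 0 := (Real.Gamma_pos_of_pos hν).ne'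
  have hΓμ : Real.Gamma (μ+1) ≠ 0 := (Real.Gamma_pos_of_pos hμ1).ne'
  have hΓμν : Real.Gamma (μ+ν+1) ≠ 0 := (Real.Gamma_pos_of_pos hμν).ne'
  have hterm : ∀ j ∈ range (m+1),
      rfac (((m-j:ℕ):ℝ)+1) (ν-1) * rfac ((j:ℝ)+1) μ
      = (asc ν (m-j) * Real.Gamma ν / ((m-j).factorial : ℝ)) *
        (asc (μ+1) j * Real.Gamma (μ+1) / (j.factorial : ℝ)) := by
    intro j hj
    rw [rfac_eq ν hν (m-j), show μ = (μ+1)-1 by ring, rfac_eq (μ+1) hμ1 j]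
    ring_nf
  rw [Finset.sum_congr rfl hterm]
  rw [show rfac ((m:ℝ)+1) (μ+ν) = rfac ((m:ℝ)+1) ((μ+ν+1)-1) by ring_nf,
    rfac_eq (μ+ν+1) hμν m, show μ+ν+1 = ν+(μ+1) by ring, ← vandermonde ν (μ+1) m]
  rw [Finset.mul_sum, Finset.sum_mul, Finset.sum_div, Finset.mul_sum]
  apply Finset.sum_congr rfl
  intro j hj
  have hj' : j ≤ m := Nat.lt_succ_iff.mp (mem_range.mp hj)
  have hfac : ((m.factorial : ℕ) : ℝ)
      = (m.choose j : ℝ) * (j.factorial : ℝ) * ((m-j).factorial : ℝ) := by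
    rw [← Nat.choose_mul_factorial_mul_factorial hj']; push_cast; ring
  have h1 : ((m-j).factorial : ℝ) ≠ 0 := Nat.cast_ne_zero.mpr (Nat.factorial_ne_zero _)
  have h2 : ((j).factorial : ℝ) ≠ 0 := Nat.cast_ne_zero.mpr (Nat.factorial_ne_zero _)
  have h3 : ((m).factorial : ℝ) ≠ 0 := Nat.cast_ne_zero.mpr (Nat.factorial_ne_zero _)
  field_simp
  rw [hfac]; ring

theorem stmt2 (ν μ : ℝ) (hν : 0 < ν) (hμ : -1 < μ) (a t : ℤ) (ht : a ≤ t) :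
    nsum ν a (fun s => rfac ((s : ℝ) - (a : ℝ)) μ) t
      = Real.Gamma (μ + 1) / Real.Gamma (μ + ν + 1) * rfac ((t : ℝ) - (a : ℝ)) (μ + ν) := by
  obtain ⟨n, hn⟩ : ∃ n : ℕ, t = a + n := ⟨(t-a).toNat, by omega⟩
  subst hn
  unfold nsum
  cases n with
  | zero =>
      simp [rfac, Real.Gamma_zero]
  | succ m =>
      rw [sum_Icc_reindex (fun s => rfac (((a + ((m:ℕ)+1:ℕ) : ℤ) : ℝ) - (s : ℝ) + 1) (ν - 1)
        * rfac ((s : ℝ) - (a : ℝ)) μ) a (m+1)]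
      have hrw : ∀ j ∈ range (m+1),
          rfac (((a + ((m:ℕ)+1:ℕ) : ℤ) : ℝ) - ((a+1+(j:ℤ) : ℤ) : ℝ) + 1) (ν - 1)
            * rfac (((a+1+(j:ℤ) : ℤ) : ℝ) - (a : ℝ)) μ
          = rfac (((m-j:ℕ):ℝ)+1) (ν-1) * rfac ((j:ℝ)+1) μ := by
        intro j hj
        have hj' : j ≤ m := Nat.lt_succ_iff.mp (mem_range.mp hj)
        have e1 : ((a + ((m:ℕ)+1:ℕ) : ℤ) : ℝ) - ((a+1+(j:ℤ) : ℤ) : ℝ) + 1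
            = ((m-j:ℕ):ℝ)+1 := by
          push_cast [Nat.cast_sub hj']; ring
        have e2 : ((a+1+(j:ℤ) : ℤ) : ℝ) - (a : ℝ) = (j:ℝ)+1 := by
          push_cast; ring
        rw [e1, e2]
      rw [Finset.sum_congr rfl hrw]
      have e3 : ((a + ((m:ℕ)+1:ℕ) : ℤ) : ℝ) - (a : ℝ) = (m:ℝ)+1 := by
        push_cast; ring
      rw [e3]
      exact key ν μ hν (by linarith) m
end

section
/- Let $0 < \nu < 1$ and $f : \mathbb{N}_a \to \mathbb{R}$. Then for all $t \in \mathbb{N}_{a+1}$, $\nabla_a^{\nu}\,\nabla_a^{-\nu} f(t) = f(t)$, i.e., the nabla fractional difference of order $\nu$ is a left inverse of the nabla fractional sum of order $\nu$. -/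
open Filter Finset

noncomputable def Acoef (ν : ℝ) (m : ℕ) : ℝ :=
  Real.Gamma (1 - ν + m) / (Real.Gamma (1 - ν) * m.factorial)

noncomputable def Bcoef (ν : ℝ) (k : ℕ) : ℝ :=
  Real.Gamma (ν + k) / (Real.Gamma ν * k.factorial)

lemma Acoef_zero (ν : ℝ) (h2 : ν < 1) : Acoef ν 0 = 1 := by
  have h : Real.Gamma (1 - ν) ≠ 0 := (Real.Gamma_pos_of_pos (by linarith)).ne'
  simp [Acoef, h]

lemma Bcoef_zero (ν : ℝ) (h1 : 0 < ν) : Bcoef ν 0 = 1 := by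
  have h : Real.Gamma ν ≠ 0 := (Real.Gamma_pos_of_pos h1).ne'
  simp [Bcoef, h]

lemma Acoef_succ (ν : ℝ) (h2 : ν < 1) (m : ℕ) :
    ((m : ℝ) + 1) * Acoef ν (m + 1) = ((m : ℝ) + 1 - ν) * Acoef ν m := by
  have hm : (0:ℝ) ≤ (m:ℝ) := Nat.cast_nonneg m
  have hpos : (0:ℝ) < 1 - ν + m := by linarith
  have hG : Real.Gamma (1 - ν) ≠ 0 := (Real.Gamma_pos_of_pos (by linarith)).ne'
  have hf : ((m.factorial : ℝ)) ≠ 0 := Nat.cast_ne_zero.mpr m.factorial_ne_zero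
  have hg : Real.Gamma (1 - ν + ((m:ℝ)+1)) = (1-ν+m) * Real.Gamma (1-ν+m) := by
    rw [show (1 - ν + ((m:ℝ)+1)) = (1-ν+(m:ℝ))+1 by ring, Real.Gamma_add_one hpos.ne']
  unfold Acoef
  rw [Nat.factorial_succ]
  push_cast
  rw [hg]
  field_simp
  ring

lemma Bcoef_succ (ν : ℝ) (h1 : 0 < ν) (k : ℕ) :
    ((k : ℝ) + 1) * Bcoef ν (k + 1) = ((k : ℝ) + ν) * Bcoef ν k := by
  have hk : (0:ℝ) ≤ (k:ℝ) := Nat.cast_nonneg k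
  have hpos : (0:ℝ) < ν + k := by linarith
  have hG : Real.Gamma ν ≠ 0 := (Real.Gamma_pos_of_pos h1).ne'
  have hf : ((k.factorial : ℝ)) ≠ 0 := Nat.cast_ne_zero.mpr k.factorial_ne_zero
  have hg : Real.Gamma (ν + ((k:ℝ)+1)) = (ν+k) * Real.Gamma (ν+k) := by
    rw [show (ν + ((k:ℝ)+1)) = (ν+(k:ℝ))+1 by ring, Real.Gamma_add_one hpos.ne']
  unfold Bcoef
  rw [Nat.factorial_succ]
  push_cast
  rw [hg]
  field_simp
  ring

lemma key_s3 (ν : ℝ) (h1 : 0 < ν) (h2 : ν < 1) (n : ℕ) :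
    ∑ p ∈ Finset.HasAntidiagonal.antidiagonal n, Acoef ν p.1 * Bcoef ν p.2 = 1 := by
  induction n with
  | zero => simp [Acoef_zero ν h2, Bcoef_zero ν h1]
  | succ n ih =>
    have hmul : ((n:ℝ) + 1) * ∑ p ∈ Finset.HasAntidiagonal.antidiagonal (n+1), Acoef ν p.1 * Bcoef ν p.2
        = ((n:ℝ) + 1) := by
      have hsplit : ((n:ℝ) + 1) * ∑ p ∈ Finset.HasAntidiagonal.antidiagonal (n+1), Acoef ν p.1 * Bcoef ν p.2
          = (∑ p ∈ Finset.HasAntidiagonal.antidiagonal (n+1), (p.1 : ℝ) * Acoef ν p.1 * Bcoef ν p.2)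
          + (∑ p ∈ Finset.HasAntidiagonal.antidiagonal (n+1), (p.2 : ℝ) * (Acoef ν p.1 * Bcoef ν p.2)) := by
        rw [Finset.mul_sum, ← Finset.sum_add_distrib]
        apply Finset.sum_congr rfl
        intro p hp
        have := Finset.HasAntidiagonal.mem_antidiagonal.mp hp
        have hc : (p.1 : ℝ) + (p.2 : ℝ) = (n : ℝ) + 1 := by exact_mod_cast congrArg (Nat.cast : ℕ → ℝ) this
        linear_combination (-(Acoef ν p.1 * Bcoef ν p.2)) * hc
      have e1 : (∑ p ∈ Finset.HasAntidiagonal.antidiagonal (n+1), (p.1 : ℝ) * Acoef ν p.1 * Bcoef ν p.2)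
          = ∑ p ∈ Finset.HasAntidiagonal.antidiagonal n, ((p.1:ℝ) + 1 - ν) * (Acoef ν p.1 * Bcoef ν p.2) := by
        rw [Finset.Nat.antidiagonal_succ, Finset.sum_cons, Finset.sum_map]
        simp only [Function.Embedding.prodMap, Function.Embedding.coeFn_mk,
          Function.Embedding.refl_apply, Nat.cast_zero]
        rw [zero_mul, zero_mul, zero_add]
        apply Finset.sum_congr rfl
        intro p _
        have hA := Acoef_succ ν h2 p.1
        simp only [Prod.map, Function.Embedding.refl_apply, Function.Embedding.coeFn_mk,
          Nat.succ_eq_add_one]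
        push_cast
        linear_combination Bcoef ν p.2 * hA
      have e2 : (∑ p ∈ Finset.HasAntidiagonal.antidiagonal (n+1), (p.2 : ℝ) * (Acoef ν p.1 * Bcoef ν p.2))
          = ∑ p ∈ Finset.HasAntidiagonal.antidiagonal n, ((p.2:ℝ) + ν) * (Acoef ν p.1 * Bcoef ν p.2) := by
        rw [Finset.Nat.antidiagonal_succ', Finset.sum_cons, Finset.sum_map]
        simp only [Function.Embedding.prodMap, Function.Embedding.coeFn_mk,
          Function.Embedding.refl_apply, Nat.cast_zero]
        rw [zero_mul, zero_add]
        apply Finset.sum_congr rfl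
        intro p _
        have hB := Bcoef_succ ν h1 p.2
        simp only [Prod.map, Function.Embedding.refl_apply, Function.Embedding.coeFn_mk,
          Nat.succ_eq_add_one]
        push_cast
        linear_combination Acoef ν p.1 * hB
      rw [hsplit, e1, e2, ← Finset.sum_add_distrib]
      have : ∀ p ∈ Finset.HasAntidiagonal.antidiagonal n,
          ((p.1:ℝ) + 1 - ν) * (Acoef ν p.1 * Bcoef ν p.2) + ((p.2:ℝ) + ν) * (Acoef ν p.1 * Bcoef ν p.2)
          = ((n:ℝ) + 1) * (Acoef ν p.1 * Bcoef ν p.2) := by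
        intro p hp
        have := Finset.HasAntidiagonal.mem_antidiagonal.mp hp
        have hc : (p.1 : ℝ) + (p.2 : ℝ) = (n : ℝ) := by exact_mod_cast congrArg (Nat.cast : ℕ → ℝ) this
        linear_combination (Acoef ν p.1 * Bcoef ν p.2) * hc
      rw [Finset.sum_congr rfl this, ← Finset.mul_sum, ih, mul_one]
    have hne : ((n:ℝ) + 1) ≠ 0 := by positivity
    have := mul_left_cancel₀ hne (hmul.trans (mul_one ((n:ℝ)+1)).symm)
    exact this

lemma key' (ν : ℝ) (h1 : 0 < ν) (h2 : ν < 1) (n : ℕ) :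
    ∑ k ∈ Finset.range (n + 1), Acoef ν (n - k) * Bcoef ν k = 1 := by
  have h := key_s3 ν h1 h2 n
  have hswap : ∑ p ∈ Finset.HasAntidiagonal.antidiagonal n, Acoef ν p.2 * Bcoef ν p.1 = 1 := by
    rw [← h]
    exact Finset.sum_nbij' Prod.swap Prod.swap
      (by intro p hp; simp [Finset.HasAntidiagonal.mem_antidiagonal] at *; omega)
      (by intro p hp; simp [Finset.HasAntidiagonal.mem_antidiagonal] at *; omega)
      (by intro p _; simp) (by intro p _; simp) (by intro p _; simp)
  rw [← hswap, Finset.Nat.sum_antidiagonal_eq_sum_range_succ_mk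
    (fun p => Acoef ν p.2 * Bcoef ν p.1) n]

lemma rfacA (ν : ℝ) (h2 : ν < 1) (m : ℕ) :
    rfac ((m : ℝ) + 1) (-ν) = Real.Gamma (1 - ν) * Acoef ν m := by
  have hG : Real.Gamma (1 - ν) ≠ 0 := (Real.Gamma_pos_of_pos (by linarith)).ne'
  have hf : ((m.factorial : ℝ)) ≠ 0 := Nat.cast_ne_zero.mpr m.factorial_ne_zero
  unfold rfac Acoef
  rw [show ((m : ℝ) + 1) + -ν = 1 - ν + m by ring, Real.Gamma_nat_eq_factorial]
  field_simp

lemma rfacB (ν : ℝ) (h1 : 0 < ν) (k : ℕ) :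
    rfac ((k : ℝ) + 1) (ν - 1) = Real.Gamma ν * Bcoef ν k := by
  have hG : Real.Gamma ν ≠ 0 := (Real.Gamma_pos_of_pos h1).ne'
  have hf : ((k.factorial : ℝ)) ≠ 0 := Nat.cast_ne_zero.mpr k.factorial_ne_zero
  unfold rfac Bcoef
  rw [show ((k : ℝ) + 1) + (ν - 1) = ν + k by ring, Real.Gamma_nat_eq_factorial]
  field_simp

lemma innerSumK (ν : ℝ) (h1 : 0 < ν) (h2 : ν < 1) (r u : ℤ) (hru : r ≤ u) :
    ∑ s ∈ Finset.Icc r u, rfac ((u : ℝ) - (s : ℝ) + 1) (-ν) * rfac ((s : ℝ) - (r : ℝ) + 1) (ν - 1)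
      = Real.Gamma (1 - ν) * Real.Gamma ν := by
  set n : ℕ := (u - r).toNat with hn
  have hn' : ((n : ℤ)) = u - r := Int.toNat_of_nonneg (by omega)
  have hre : ∑ s ∈ Finset.Icc r u,
        rfac ((u : ℝ) - (s : ℝ) + 1) (-ν) * rfac ((s : ℝ) - (r : ℝ) + 1) (ν - 1)
      = ∑ k ∈ Finset.range (n + 1),
        rfac (((n - k : ℕ) : ℝ) + 1) (-ν) * rfac ((k : ℝ) + 1) (ν - 1) := by
    apply Finset.sum_nbij' (fun s => (s - r).toNat) (fun k => r + (k : ℤ))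
    · intro s hs; simp only [Finset.mem_Icc] at hs; simp only [Finset.mem_range]; omega
    · intro k hk; simp only [Finset.mem_range] at hk; simp only [Finset.mem_Icc]; omega
    · intro s hs; simp only [Finset.mem_Icc] at hs; omega
    · intro k hk; simp only [Finset.mem_range] at hk; omega
    · intro s hs
      simp only [Finset.mem_Icc] at hs
      have h1' : (((s - r).toNat : ℤ)) = s - r := Int.toNat_of_nonneg (by omega)
      have h2' : ((n - (s - r).toNat : ℕ) : ℤ) = u - s := by omega
      congr 2
      · have := congrArg (Int.cast : ℤ → ℝ) h2'
        push_cast at this ⊢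
        linarith
      · have := congrArg (Int.cast : ℤ → ℝ) h1'
        push_cast at this ⊢
        linarith
  rw [hre]
  have : ∀ k ∈ Finset.range (n + 1),
      rfac (((n - k : ℕ) : ℝ) + 1) (-ν) * rfac ((k : ℝ) + 1) (ν - 1)
        = (Real.Gamma (1 - ν) * Real.Gamma ν) * (Acoef ν (n - k) * Bcoef ν k) := by
    intro k _
    rw [rfacA ν h2 (n - k), rfacB ν h1 k]
    ring
  rw [Finset.sum_congr rfl this, ← Finset.mul_sum, key' ν h1 h2 n, mul_one]

lemma main_comp (ν : ℝ) (h1 : 0 < ν) (h2 : ν < 1) (a : ℤ) (f : ℤ → ℝ) (u : ℤ) :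
    nsum (1 - ν) a (nsum ν a f) u = ∑ r ∈ Finset.Icc (a + 1) u, f r := by
  have hG1 : Real.Gamma (1 - ν) ≠ 0 := (Real.Gamma_pos_of_pos (by linarith)).ne'
  have hG2 : Real.Gamma ν ≠ 0 := (Real.Gamma_pos_of_pos h1).ne'
  have h : nsum (1 - ν) a (nsum ν a f) u
      = ∑ s ∈ Finset.Icc (a + 1) u, ∑ r ∈ Finset.Icc (a + 1) s,
          (1 / Real.Gamma (1 - ν)) * (1 / Real.Gamma ν) *
            (rfac ((u : ℝ) - (s : ℝ) + 1) (-ν) * rfac ((s : ℝ) - (r : ℝ) + 1) (ν - 1)) * f r := by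
    unfold nsum
    simp only [Finset.mul_sum]
    apply Finset.sum_congr rfl
    intro s _
    apply Finset.sum_congr rfl
    intro r _
    rw [show (1 - ν - 1) = -ν by ring]
    ring
  rw [h, Finset.sum_comm' (t' := Finset.Icc (a + 1) u) (s' := fun r => Finset.Icc r u)
    (by intro s r; simp only [Finset.mem_Icc]; omega)]
  apply Finset.sum_congr rfl
  intro r hr
  simp only [Finset.mem_Icc] at hr
  have hinner := innerSumK ν h1 h2 r u hr.2
  calc ∑ s ∈ Finset.Icc r u,
        (1 / Real.Gamma (1 - ν)) * (1 / Real.Gamma ν) *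
          (rfac ((u : ℝ) - (s : ℝ) + 1) (-ν) * rfac ((s : ℝ) - (r : ℝ) + 1) (ν - 1)) * f r
      = ((1 / Real.Gamma (1 - ν)) * (1 / Real.Gamma ν) *
          ∑ s ∈ Finset.Icc r u,
            rfac ((u : ℝ) - (s : ℝ) + 1) (-ν) * rfac ((s : ℝ) - (r : ℝ) + 1) (ν - 1)) * f r := by
        rw [Finset.mul_sum, Finset.sum_mul]
    _ = f r := by rw [hinner]; field_simp

theorem stmt3 (ν : ℝ) (h1 : 0 < ν) (h2 : ν < 1) (a : ℤ) (f : ℤ → ℝ)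
    (t : ℤ) (ht : a + 1 ≤ t) :
    ndiff ν a (nsum ν a f) t = f t := by
  unfold ndiff nbl
  rw [main_comp ν h1 h2 a f t, main_comp ν h1 h2 a f (t - 1)]
  have hIcc : Finset.Icc (a + 1) t = insert t (Finset.Icc (a + 1) (t - 1)) := by
    ext x
    simp only [Finset.mem_Icc, Finset.mem_insert]
    omega
  rw [hIcc, Finset.sum_insert (by simp only [Finset.mem_Icc]; omega)]
  ring
end

section
/- Let $0 < \nu < 1$, $a \in \mathbb{Z}$, $f : \mathbb{N}_{a+1} \times \mathbb{R} \to \mathbb{R}$, and $c \in \mathbb{R}$. A function $y : \mathbb{N}_a \to \mathbb{R}$ satisfies $\nabla_{a-1}^{\nu} y(t) = f(t, y(t))$ for all $t \in \mathbb{N}_{a+1}$ together with $y(a) = c$ if and only if $y(t) = \frac{(t-a+1)^{\overline{\nu-1}}}{\Gamma(\nu)}\, c + \nabla_a^{-\nu} f(t, y(t))$ for all $t \in \mathbb{N}_a$. -/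
open Filter Finset

/-! ### Auxiliary lemmas -/

/-- Rising factorial as a finite product. -/
noncomputable def Pr (n : ℕ) (x : ℝ) : ℝ := ∏ i ∈ Finset.range n, (x + i)

lemma Pr_succ (n : ℕ) (x : ℝ) : Pr (n+1) x = Pr n x * (x + n) := by
  simp [Pr, Finset.prod_range_succ]

lemma Gamma_add_nat {x : ℝ} (hx : 0 < x) (n : ℕ) :
    Real.Gamma (x + n) = Pr n x * Real.Gamma x := by
  induction n with
  | zero => simp [Pr]
  | succ n ih =>
    have hxn : x + (n:ℝ) ≠ 0 := by positivity
    have : x + ((n:ℕ)+1:ℕ) = (x + n) + 1 := by push_cast; ring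
    rw [this, Real.Gamma_add_one hxn, ih, Pr_succ]; ring

lemma Pr_one_eq (n : ℕ) : Pr n 1 = n.factorial := by
  induction n with
  | zero => simp [Pr]
  | succ n ih => rw [Pr_succ, ih]; push_cast [Nat.factorial_succ]; ring

/-- Vandermonde's identity for rising factorials. -/
lemma vand (n : ℕ) (x y : ℝ) :
    ∑ j ∈ range (n+1), (n.choose j : ℝ) * Pr j x * Pr (n-j) y = Pr n (x+y) := by
  induction n with
  | zero => simp [Pr]
  | succ n ih =>
    have h1 : ∑ j ∈ range (n+2), ((n+1).choose j : ℝ) * Pr j x * Pr (n+1-j) y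
        = ∑ k ∈ range (n+1), ((n+1).choose (k+1) : ℝ) * Pr (k+1) x * Pr (n-k) y
          + Pr (n+1) y := by
      rw [Finset.sum_range_succ' _ (n+1)]
      simp [Pr]
    have h2 : ∀ k ∈ range (n+1), ((n+1).choose (k+1) : ℝ) * Pr (k+1) x * Pr (n-k) y
        = (n.choose k : ℝ) * Pr k x * Pr (n-k) y * (x + k)
          + (n.choose (k+1) : ℝ) * Pr (k+1) x * Pr (n-k) y := by
      intro k hk
      rw [Nat.choose_succ_succ]
      push_cast
      rw [Pr_succ]
      ring
    have h3 : ∑ k ∈ range (n+1), (n.choose (k+1) : ℝ) * Pr (k+1) x * Pr (n-k) y + Pr (n+1) y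
        = ∑ j ∈ range (n+1), (n.choose j : ℝ) * Pr j x * Pr (n-j) y * (y + (n-j:ℕ)) := by
      have e1 : ∀ j ∈ range (n+1), (n.choose j : ℝ) * Pr j x * Pr (n-j) y * (y + (n-j:ℕ))
          = (n.choose j : ℝ) * Pr j x * Pr (n+1-j) y := by
        intro j hj
        have hj' : j ≤ n := by simpa using Nat.lt_succ_iff.mp (mem_range.mp hj)
        have : n + 1 - j = (n - j) + 1 := by omega
        rw [this, Pr_succ]; ring
      rw [Finset.sum_congr rfl e1]
      have e2 := Finset.sum_range_succ' (fun j => (n.choose j : ℝ) * Pr j x * Pr (n+1-j) y) (n+1)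
      have e3 : ∑ j ∈ range (n+2), (n.choose j : ℝ) * Pr j x * Pr (n+1-j) y
          = ∑ j ∈ range (n+1), (n.choose j : ℝ) * Pr j x * Pr (n+1-j) y := by
        rw [Finset.sum_range_succ]
        simp [Nat.choose_succ_self]
      rw [← e3, e2]
      congr 1
      · apply Finset.sum_congr rfl
        intro k hk
        have : n + 1 - (k+1) = n - k := by omega
        rw [this]
      · simp [Pr]
    rw [h1, Finset.sum_congr rfl h2, Finset.sum_add_distrib, add_assoc, h3,
        ← Finset.sum_add_distrib]
    have e4 : ∀ k ∈ range (n+1),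
        (n.choose k : ℝ) * Pr k x * Pr (n-k) y * (x + k)
          + (n.choose k : ℝ) * Pr k x * Pr (n-k) y * (y + (n-k:ℕ))
        = ((n.choose k : ℝ) * Pr k x * Pr (n-k) y) * (x + y + n) := by
      intro k hk
      have hk' : k ≤ n := by simpa using Nat.lt_succ_iff.mp (mem_range.mp hk)
      have : ((n - k : ℕ) : ℝ) = (n:ℝ) - k := by
        push_cast [Nat.cast_sub hk']; ring
      rw [this]; ring
    rw [Finset.sum_congr rfl e4, ← Finset.sum_mul, ih, Pr_succ]

lemma rfac_nat (m : ℕ) (r : ℝ) :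
    rfac ((m:ℝ)+1) r = Real.Gamma ((1+r) + m) / m.factorial := by
  have h1 : (m:ℝ) + 1 + r = (1+r) + m := by ring
  rw [rfac, h1, Real.Gamma_nat_eq_factorial]

lemma conv_nat {ν : ℝ} (h1 : 0 < ν) (h2 : ν < 1) (n : ℕ) :
    ∑ j ∈ range (n+1),
      (Real.Gamma ((1-ν) + ((n-j:ℕ):ℝ)) / (n-j).factorial) * (Real.Gamma (ν + j) / j.factorial)
      = Real.Gamma (1-ν) * Real.Gamma ν := by
  have hν : (0:ℝ) < ν := h1
  have hν' : (0:ℝ) < 1 - ν := by linarith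
  have key : ∀ j ∈ range (n+1),
      (Real.Gamma ((1-ν) + ((n-j:ℕ):ℝ)) / (n-j).factorial) * (Real.Gamma (ν + j) / j.factorial)
      = ((n.choose j : ℝ) * Pr j ν * Pr (n-j) (1-ν)) * (Real.Gamma (1-ν) * Real.Gamma ν / n.factorial) := by
    intro j hj
    have hj' : j ≤ n := Nat.lt_succ_iff.mp (mem_range.mp hj)
    rw [Gamma_add_nat hν' (n-j), Gamma_add_nat hν j]
    have hfac : (n.choose j : ℝ) * (j.factorial : ℝ) * ((n-j).factorial : ℝ) = n.factorial := by
      exact_mod_cast congrArg Nat.cast (Nat.choose_mul_factorial_mul_factorial hj')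
    have hjf : (j.factorial : ℝ) ≠ 0 := by positivity
    have hnjf : ((n-j).factorial : ℝ) ≠ 0 := by positivity
    have hnf : (n.factorial : ℝ) ≠ 0 := by positivity
    field_simp
    rw [← hfac]
    ring
  rw [Finset.sum_congr rfl key, ← Finset.sum_mul, vand]
  have hs : ν + (1 - ν) = 1 := by ring
  rw [hs, Pr_one_eq]
  have hnf : (n.factorial : ℝ) ≠ 0 := by positivity
  field_simp

lemma conv_int {ν : ℝ} (h1 : 0 < ν) (h2 : ν < 1) (u t : ℤ) (h : u ≤ t) :
    ∑ s ∈ Finset.Icc u t, rfac ((t:ℝ) - (s:ℝ) + 1) (-ν) * rfac ((s:ℝ) - (u:ℝ) + 1) (ν - 1)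
      = Real.Gamma (1-ν) * Real.Gamma ν := by
  set n : ℕ := (t - u).toNat with hn
  have hnt : t = u + n := by omega
  rw [← conv_nat h1 h2 n]
  apply Finset.sum_nbij' (fun s => (s - u).toNat) (fun j => u + (j:ℤ))
  · intro s hs
    simp only [mem_Icc] at hs
    simp only [mem_range]
    omega
  · intro j hj
    simp only [mem_range] at hj
    simp only [mem_Icc]
    omega
  · intro s hs
    simp only [mem_Icc] at hs
    omega
  · intro j hj
    simp only [mem_range] at hj
    omega
  · intro s hs
    simp only [mem_Icc] at hs
    set j : ℕ := (s - u).toNat with hj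
    have hsj : s = u + j := by omega
    have hjn : j ≤ n := by omega
    have e1 : (t:ℝ) - (s:ℝ) + 1 = ((n - j : ℕ):ℝ) + 1 := by
      have : ((n - j : ℕ):ℤ) = t - s := by omega
      have := congrArg (Int.cast : ℤ → ℝ) this
      push_cast at this ⊢
      linarith
    have e2 : (s:ℝ) - (u:ℝ) + 1 = (j:ℝ) + 1 := by
      have : ((j:ℕ):ℤ) = s - u := by omega
      have := congrArg (Int.cast : ℤ → ℝ) this
      push_cast at this ⊢
      linarith
    rw [e1, e2, rfac_nat, rfac_nat]
    have e3 : 1 + -ν = 1 - ν := by ring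
    have e4 : 1 + (ν - 1) = ν := by ring
    rw [e3, e4]

lemma rfac_one (r : ℝ) : rfac 1 r = Real.Gamma (1+r) := by
  simp [rfac, Real.Gamma_one]

lemma Icc_decomp (a t : ℤ) (h : a ≤ t) :
    Finset.Icc a t = insert t (Finset.Icc a (t-1)) := by
  ext s
  simp only [Finset.mem_Icc, Finset.mem_insert]
  omega

lemma key_s5 {ν : ℝ} (h1 : 0 < ν) (h2 : ν < 1) (u t : ℤ) (h : u ≤ t - 1) :
    ∑ s ∈ Finset.Icc u (t-1),
      (rfac ((t:ℝ) - (s:ℝ) + 1) (-ν) - rfac ((t:ℝ) - (s:ℝ)) (-ν)) * rfac ((s:ℝ) - (u:ℝ) + 1) (ν - 1)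
      = -(Real.Gamma (1-ν) * rfac ((t:ℝ) - (u:ℝ) + 1) (ν - 1)) := by
  have ht : t ∉ Finset.Icc u (t-1) := by simp
  have hA : ∑ s ∈ Finset.Icc u (t-1),
      rfac ((t:ℝ) - (s:ℝ) + 1) (-ν) * rfac ((s:ℝ) - (u:ℝ) + 1) (ν - 1)
      = Real.Gamma (1-ν) * Real.Gamma ν
        - Real.Gamma (1-ν) * rfac ((t:ℝ) - (u:ℝ) + 1) (ν - 1) := by
    have := conv_int h1 h2 u t (by omega)
    rw [Icc_decomp u t (by omega), Finset.sum_insert ht] at this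
    have e : (t:ℝ) - (t:ℝ) + 1 = 1 := by ring
    rw [e, rfac_one] at this
    have e2 : 1 + -ν = 1 - ν := by ring
    rw [e2] at this
    linarith
  have hB : ∑ s ∈ Finset.Icc u (t-1),
      rfac ((t:ℝ) - (s:ℝ)) (-ν) * rfac ((s:ℝ) - (u:ℝ) + 1) (ν - 1)
      = Real.Gamma (1-ν) * Real.Gamma ν := by
    have := conv_int h1 h2 u (t-1) h
    have e : ∀ s ∈ Finset.Icc u (t-1),
        rfac (((t-1:ℤ):ℝ) - (s:ℝ) + 1) (-ν) * rfac ((s:ℝ) - (u:ℝ) + 1) (ν - 1)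
        = rfac ((t:ℝ) - (s:ℝ)) (-ν) * rfac ((s:ℝ) - (u:ℝ) + 1) (ν - 1) := by
      intro s hs
      have : ((t-1:ℤ):ℝ) - (s:ℝ) + 1 = (t:ℝ) - (s:ℝ) := by push_cast; ring
      rw [this]
    rw [Finset.sum_congr rfl e] at this
    exact this
  have : ∑ s ∈ Finset.Icc u (t-1),
      (rfac ((t:ℝ) - (s:ℝ) + 1) (-ν) - rfac ((t:ℝ) - (s:ℝ)) (-ν)) * rfac ((s:ℝ) - (u:ℝ) + 1) (ν - 1)
      = (∑ s ∈ Finset.Icc u (t-1), rfac ((t:ℝ) - (s:ℝ) + 1) (-ν) * rfac ((s:ℝ) - (u:ℝ) + 1) (ν - 1))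
        - ∑ s ∈ Finset.Icc u (t-1), rfac ((t:ℝ) - (s:ℝ)) (-ν) * rfac ((s:ℝ) - (u:ℝ) + 1) (ν - 1) := by
    rw [← Finset.sum_sub_distrib]
    apply Finset.sum_congr rfl
    intro s hs
    ring
  rw [this, hA, hB]
  ring

lemma master {ν : ℝ} (h1 : 0 < ν) (h2 : ν < 1) (a t : ℤ) (ht : a + 1 ≤ t)
    (y g : ℤ → ℝ) (c : ℝ)
    (IH : ∀ s, a ≤ s → s ≤ t - 1 →
      y s = rfac ((s:ℝ) - (a:ℝ) + 1) (ν - 1) / Real.Gamma ν * c + nsum ν a g s) :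
    ndiff ν (a-1) y t - g t
      = y t - (rfac ((t:ℝ) - (a:ℝ) + 1) (ν - 1) / Real.Gamma ν * c + nsum ν a g t) := by
  have hΓ1 : Real.Gamma (1-ν) ≠ 0 := ne_of_gt (Real.Gamma_pos_of_pos (by linarith))
  have hΓ2 : Real.Gamma ν ≠ 0 := ne_of_gt (Real.Gamma_pos_of_pos h1)
  set Γ1 := Real.Gamma (1-ν) with hΓ1def
  set Γ2 := Real.Gamma ν with hΓ2def
  set D : ℤ → ℝ := fun s => rfac ((t:ℝ) - (s:ℝ) + 1) (-ν) - rfac ((t:ℝ) - (s:ℝ)) (-ν) with hD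
  have ht' : t ∉ Finset.Icc a (t-1) := by simp
  have stepA : ndiff ν (a-1) y t = y t + (1/Γ1) * ∑ s ∈ Finset.Icc a (t-1), D s * y s := by
    unfold ndiff nbl nsum
    rw [show a - 1 + 1 = a by omega]
    have hsplit : ∑ s ∈ Finset.Icc a t, rfac ((t:ℝ) - (s:ℝ) + 1) (1 - ν - 1) * y s
        = Γ1 * y t + ∑ s ∈ Finset.Icc a (t-1), rfac ((t:ℝ) - (s:ℝ) + 1) (-ν) * y s := by
      rw [Icc_decomp a t (by omega), Finset.sum_insert ht']
      congr 1
      · rw [show (t:ℝ) - (t:ℝ) + 1 = 1 by ring, show 1 - ν - 1 = -ν by ring, rfac_one,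
          show 1 + -ν = 1 - ν by ring]
      · apply Finset.sum_congr rfl
        intro s hs
        rw [show 1 - ν - 1 = -ν by ring]
    have hsecond : ∑ s ∈ Finset.Icc a (t-1), rfac (((t-1:ℤ):ℝ) - (s:ℝ) + 1) (1 - ν - 1) * y s
        = ∑ s ∈ Finset.Icc a (t-1), rfac ((t:ℝ) - (s:ℝ)) (-ν) * y s := by
      apply Finset.sum_congr rfl
      intro s hs
      rw [show ((t-1:ℤ):ℝ) - (s:ℝ) + 1 = (t:ℝ) - (s:ℝ) by push_cast; ring,
        show 1 - ν - 1 = -ν by ring]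
    rw [hsplit, hsecond]
    have hDsum : ∑ s ∈ Finset.Icc a (t-1), D s * y s
        = (∑ s ∈ Finset.Icc a (t-1), rfac ((t:ℝ) - (s:ℝ) + 1) (-ν) * y s)
          - ∑ s ∈ Finset.Icc a (t-1), rfac ((t:ℝ) - (s:ℝ)) (-ν) * y s := by
      rw [← Finset.sum_sub_distrib]
      apply Finset.sum_congr rfl
      intro s hs
      simp only [hD]
      ring
    rw [hDsum]
    field_simp
    rw [← hΓ1def]; field_simp; ring
  have stepB : ∑ s ∈ Finset.Icc a (t-1), D s * y s
      = (c/Γ2) * (∑ s ∈ Finset.Icc a (t-1), D s * rfac ((s:ℝ) - (a:ℝ) + 1) (ν - 1))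
        + (1/Γ2) * ∑ s ∈ Finset.Icc a (t-1), ∑ u ∈ Finset.Icc (a+1) s,
            D s * (rfac ((s:ℝ) - (u:ℝ) + 1) (ν - 1) * g u) := by
    rw [Finset.mul_sum, Finset.mul_sum, ← Finset.sum_add_distrib]
    apply Finset.sum_congr rfl
    intro s hs
    simp only [Finset.mem_Icc] at hs
    rw [IH s hs.1 hs.2]
    unfold nsum
    rw [Finset.mul_sum, Finset.mul_sum]
    rw [mul_add]
    congr 1
    · ring
    · rw [Finset.mul_sum]
      apply Finset.sum_congr rfl
      intro u hu
      ring
  have hkeyA : ∑ s ∈ Finset.Icc a (t-1), D s * rfac ((s:ℝ) - (a:ℝ) + 1) (ν - 1)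
      = -(Γ1 * rfac ((t:ℝ) - (a:ℝ) + 1) (ν - 1)) := key_s5 h1 h2 a t (by omega)
  have hswap : ∑ s ∈ Finset.Icc a (t-1), ∑ u ∈ Finset.Icc (a+1) s,
        D s * (rfac ((s:ℝ) - (u:ℝ) + 1) (ν - 1) * g u)
      = ∑ u ∈ Finset.Icc (a+1) (t-1), ∑ s ∈ Finset.Icc u (t-1),
        D s * (rfac ((s:ℝ) - (u:ℝ) + 1) (ν - 1) * g u) := by
    apply Finset.sum_comm'
    intro s u
    simp only [Finset.mem_Icc]
    omega
  have hinner : ∀ u ∈ Finset.Icc (a+1) (t-1),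
      ∑ s ∈ Finset.Icc u (t-1), D s * (rfac ((s:ℝ) - (u:ℝ) + 1) (ν - 1) * g u)
      = -(Γ1 * rfac ((t:ℝ) - (u:ℝ) + 1) (ν - 1)) * g u := by
    intro u hu
    simp only [Finset.mem_Icc] at hu
    have : ∑ s ∈ Finset.Icc u (t-1), D s * (rfac ((s:ℝ) - (u:ℝ) + 1) (ν - 1) * g u)
        = (∑ s ∈ Finset.Icc u (t-1), D s * rfac ((s:ℝ) - (u:ℝ) + 1) (ν - 1)) * g u := by
      rw [Finset.sum_mul]
      apply Finset.sum_congr rfl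
      intro s hs
      ring
    rw [this, key_s5 h1 h2 u t hu.2]
  have hnsum : nsum ν a g t = (1/Γ2) * ∑ u ∈ Finset.Icc (a+1) (t-1),
      rfac ((t:ℝ) - (u:ℝ) + 1) (ν - 1) * g u + g t := by
    unfold nsum
    rw [Icc_decomp (a+1) t ht, Finset.sum_insert (by simp)]
    rw [show (t:ℝ) - (t:ℝ) + 1 = 1 by ring, rfac_one, show 1 + (ν - 1) = ν by ring]
    field_simp
    ring
  rw [stepA, stepB, hkeyA, hswap, Finset.sum_congr rfl hinner, hnsum]
  have hfin : ∑ x ∈ Finset.Icc (a+1) (t-1), -(Γ1 * rfac ((t:ℝ) - (x:ℝ) + 1) (ν - 1)) * g x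
      = -Γ1 * ∑ x ∈ Finset.Icc (a+1) (t-1), rfac ((t:ℝ) - (x:ℝ) + 1) (ν - 1) * g x := by
    rw [Finset.mul_sum]
    apply Finset.sum_congr rfl
    intro x hx
    ring
  rw [hfin]
  field_simp
  ring

theorem stmt5 (ν : ℝ) (h1 : 0 < ν) (h2 : ν < 1) (a : ℤ) (f : ℤ → ℝ → ℝ) (c : ℝ)
    (y : ℤ → ℝ) :
    ((∀ t, a + 1 ≤ t → ndiff ν (a - 1) y t = f t (y t)) ∧ y a = c) ↔
    (∀ t, a ≤ t → y t = rfac ((t : ℝ) - (a : ℝ) + 1) (ν - 1) / Real.Gamma ν * c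
      + nsum ν a (fun s => f s (y s)) t) := by
  have hΓ2 : Real.Gamma ν ≠ 0 := ne_of_gt (Real.Gamma_pos_of_pos h1)
  set g : ℤ → ℝ := fun s => f s (y s) with hg
  have hbase : rfac ((a : ℝ) - (a : ℝ) + 1) (ν - 1) / Real.Gamma ν * c
      + nsum ν a g a = c := by
    have h0 : nsum ν a g a = 0 := by
      unfold nsum
      rw [Finset.Icc_eq_empty (by omega)]
      simp
    rw [h0, show (a:ℝ) - (a:ℝ) + 1 = 1 by ring, rfac_one, show 1 + (ν - 1) = ν by ring]
    field_simp
    simp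
  constructor
  · rintro ⟨hP, hc⟩
    have H : ∀ n : ℕ, ∀ s : ℤ, a ≤ s → s = a + n →
        y s = rfac ((s : ℝ) - (a : ℝ) + 1) (ν - 1) / Real.Gamma ν * c + nsum ν a g s := by
      intro n
      induction n using Nat.strong_induction_on with
      | _ n IHn =>
        intro s hs hsn
        by_cases hsa : s = a
        · subst hsa
          rw [hbase, hc]
        · have hs1 : a + 1 ≤ s := by omega
          have hIH : ∀ w, a ≤ w → w ≤ s - 1 →
              y w = rfac ((w : ℝ) - (a : ℝ) + 1) (ν - 1) / Real.Gamma ν * c + nsum ν a g w := by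
            intro w hw1 hw2
            exact IHn (w - a).toNat (by omega) w hw1 (by omega)
          have hm := master h1 h2 a s hs1 y g c hIH
          have hps := hP s hs1
          rw [hps] at hm
          simp only [hg] at hm ⊢
          linarith
    intro t ht
    exact H (t - a).toNat t ht (by omega)
  · intro hQ
    constructor
    · intro t ht1
      have hIH : ∀ w, a ≤ w → w ≤ t - 1 →
          y w = rfac ((w : ℝ) - (a : ℝ) + 1) (ν - 1) / Real.Gamma ν * c + nsum ν a g w := by
        intro w hw1 _
        exact hQ w hw1
      have hm := master h1 h2 a t ht1 y g c hIH
      have hq := hQ t (by omega)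
      rw [← hq] at hm
      simp only [hg] at hm
      linarith
    · have := hQ a (le_refl a)
      rw [this, hbase]
end

section
/- Let $0 < \nu < 1$ and $a \in \mathbb{Z}$. Then for all $t \in \mathbb{N}_{a+1}$, $\nabla_{a-1}^{\nu}\left(\frac{(t-(a-1))^{\overline{\nu-1}}}{\Gamma(\nu)}\right) = 0$; i.e., the function $h(t) = (t-a+1)^{\overline{\nu-1}}/\Gamma(\nu)$ is annihilated by the $\nu$-th order nabla fractional difference based at $a-1$. -/
open Filter Finset

noncomputable def Ufn (ν : ℝ) (j : ℕ) : ℝ := Real.Gamma (j + ν) / Real.Gamma (j + 1)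
noncomputable def Vfn (ν : ℝ) (k : ℕ) : ℝ := Real.Gamma (k + 1 - ν) / Real.Gamma (k + 1)

lemma term_id (ν x y : ℝ) (h1 : 0 < ν) (h2 : ν < 1) (hx : 0 ≤ x) (hy : 0 ≤ y) :
    (Real.Gamma (x + ν) / Real.Gamma (x + 1)) * (Real.Gamma (y + 1 + 1 - ν) / Real.Gamma (y + 1 + 1))
      - (Real.Gamma (x + ν) / Real.Gamma (x + 1)) * (Real.Gamma (y + 1 - ν) / Real.Gamma (y + 1))
    = (-((x + 1) / (x + y + 1)) * (Real.Gamma (x + 1 + ν) / Real.Gamma (x + 1 + 1)) *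
        (Real.Gamma (y + 1 - ν) / Real.Gamma (y + 1)))
      - (-(x / (x + y + 1)) * (Real.Gamma (x + ν) / Real.Gamma (x + 1)) *
        (Real.Gamma (y + 1 + 1 - ν) / Real.Gamma (y + 1 + 1))) := by
  have hA : (0:ℝ) < x + ν := by linarith
  have hB : (0:ℝ) < x + 1 := by linarith
  have hC : (0:ℝ) < y + 1 - ν := by linarith
  have hD : (0:ℝ) < y + 1 := by linarith
  have e1 : Real.Gamma (x + 1 + ν) = (x + ν) * Real.Gamma (x + ν) := by
    rw [show x + 1 + ν = (x + ν) + 1 by ring, Real.Gamma_add_one hA.ne']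
  have e2 : Real.Gamma (x + 1 + 1) = (x + 1) * Real.Gamma (x + 1) := by
    rw [Real.Gamma_add_one hB.ne']
  have e3 : Real.Gamma (y + 1 + 1 - ν) = (y + 1 - ν) * Real.Gamma (y + 1 - ν) := by
    rw [show y + 1 + 1 - ν = (y + 1 - ν) + 1 by ring, Real.Gamma_add_one hC.ne']
  have e4 : Real.Gamma (y + 1 + 1) = (y + 1) * Real.Gamma (y + 1) := by
    rw [Real.Gamma_add_one hD.ne']
  have gA := (Real.Gamma_pos_of_pos hA).ne'
  have gB := (Real.Gamma_pos_of_pos hB).ne'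
  have gC := (Real.Gamma_pos_of_pos hC).ne'
  have gD := (Real.Gamma_pos_of_pos hD).ne'
  have hS : (0:ℝ) < x + y + 1 := by linarith
  rw [e1, e2, e3, e4]
  field_simp
  ring

lemma key_sum (ν : ℝ) (h1 : 0 < ν) (h2 : ν < 1) (n : ℕ) :
    ∑ j ∈ Finset.range (n + 1), Ufn ν j * Vfn ν (n - j)
      = Real.Gamma ν * Real.Gamma (1 - ν) := by
  induction n with
  | zero =>
      simp [Ufn, Vfn, Real.Gamma_one]
  | succ n ih =>
      set G : ℕ → ℝ := fun j => -((j : ℝ) / ((n : ℝ) + 1)) * Ufn ν j * Vfn ν (n + 1 - j) with hG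
      have tel : ∑ j ∈ Finset.range (n + 1), (G (j + 1) - G j) = G (n + 1) - G 0 :=
        Finset.sum_range_sub G (n + 1)
      have step : ∀ j ∈ Finset.range (n + 1),
          Ufn ν j * Vfn ν (n + 1 - j) - Ufn ν j * Vfn ν (n - j) = G (j + 1) - G j := by
        intro j hj
        rw [Finset.mem_range] at hj
        have hjn : j ≤ n := Nat.lt_succ_iff.mp hj
        have h1' : n + 1 - j = (n - j) + 1 := by omega
        have h2' : n + 1 - (j + 1) = n - j := by omega
        have hc : ((n - j : ℕ) : ℝ) = (n : ℝ) - (j : ℝ) := by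
          push_cast [hjn]; ring
        simp only [hG, h1', h2', Ufn, Vfn]
        push_cast
        rw [hc]
        have hjr : (j : ℝ) ≤ (n : ℝ) := by exact_mod_cast hjn
        have := term_id ν (j : ℝ) ((n : ℝ) - (j : ℝ)) h1 h2 (by positivity)
          (by linarith)
        have hxy : (j : ℝ) + ((n : ℝ) - (j : ℝ)) + 1 = (n : ℝ) + 1 := by ring
        rw [hxy] at this
        convert this using 2
      calc ∑ j ∈ Finset.range (n + 1 + 1), Ufn ν j * Vfn ν (n + 1 - j)
          = (∑ j ∈ Finset.range (n + 1), Ufn ν j * Vfn ν (n + 1 - j))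
            + Ufn ν (n + 1) * Vfn ν 0 := by
            rw [Finset.sum_range_succ]; simp
        _ = (∑ j ∈ Finset.range (n + 1),
              (Ufn ν j * Vfn ν (n - j) + (G (j + 1) - G j)))
            + Ufn ν (n + 1) * Vfn ν 0 := by
            apply congrArg (· + Ufn ν (n + 1) * Vfn ν 0)
            apply Finset.sum_congr rfl
            intro j hj
            have := step j hj
            linarith
        _ = (∑ j ∈ Finset.range (n + 1), Ufn ν j * Vfn ν (n - j))
            + (G (n + 1) - G 0) + Ufn ν (n + 1) * Vfn ν 0 := by
            rw [Finset.sum_add_distrib, tel]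
        _ = Real.Gamma ν * Real.Gamma (1 - ν) := by
            rw [ih]
            have hG0 : G 0 = 0 := by simp [hG]
            have hGn : G (n + 1) = -Ufn ν (n + 1) * Vfn ν 0 := by
              simp only [hG]
              have : n + 1 - (n + 1) = 0 := by omega
              rw [this]
              have hne : ((n : ℝ) + 1) ≠ 0 := by positivity
              push_cast
              field_simp
            rw [hG0, hGn]; ring

lemma nsum_eq_one (ν : ℝ) (h1 : 0 < ν) (h2 : ν < 1) (a t : ℤ) (ht : a ≤ t) :
    nsum (1 - ν) (a - 1) (fun s => rfac ((s : ℝ) - (a : ℝ) + 1) (ν - 1) / Real.Gamma ν) t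
      = 1 := by
  have hΓν := (Real.Gamma_pos_of_pos h1).ne'
  have hΓν' := (Real.Gamma_pos_of_pos (by linarith : (0:ℝ) < 1 - ν)).ne'
  unfold nsum
  have hab : a - 1 + 1 = a := by ring
  rw [hab]
  set n : ℕ := (t - a).toNat with hn
  have hnc : (n : ℤ) = t - a := Int.toNat_of_nonneg (by omega)
  have hre : ∑ s ∈ Finset.Icc a t,
      rfac ((t : ℝ) - (s : ℝ) + 1) (1 - ν - 1) *
        (rfac ((s : ℝ) - (a : ℝ) + 1) (ν - 1) / Real.Gamma ν)
      = ∑ j ∈ Finset.range (n + 1),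
        (Ufn ν j * Vfn ν (n - j)) / Real.Gamma ν := by
    apply Finset.sum_nbij' (fun s => (s - a).toNat) (fun j => a + (j : ℤ))
    · intro s hs
      rw [Finset.mem_Icc] at hs
      rw [Finset.mem_range]
      omega
    · intro j hj
      rw [Finset.mem_range] at hj
      rw [Finset.mem_Icc]
      omega
    · intro s hs
      rw [Finset.mem_Icc] at hs
      omega
    · intro j hj
      rw [Finset.mem_range] at hj
      omega
    · intro s hs
      rw [Finset.mem_Icc] at hs
      set j : ℕ := (s - a).toNat with hj
      have hjc : (j : ℤ) = s - a := Int.toNat_of_nonneg (by omega)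
      have hjn : j ≤ n := by omega
      have h1' : ((s : ℝ)) - (a : ℝ) + 1 = (j : ℝ) + 1 := by
        have : ((j : ℤ) : ℝ) = (s : ℝ) - (a : ℝ) := by rw [hjc]; push_cast; ring
        push_cast at this ⊢; linarith
      have h2' : ((t : ℝ)) - (s : ℝ) + 1 = ((n - j : ℕ) : ℝ) + 1 := by
        have hnj : ((n - j : ℕ) : ℤ) = t - s := by omega
        have : ((n - j : ℕ) : ℝ) = (t : ℝ) - (s : ℝ) := by
          rw [show ((n - j : ℕ) : ℝ) = (((n - j : ℕ) : ℤ) : ℝ) by push_cast; ring, hnj]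
          push_cast; ring
        linarith
      rw [h1', h2']
      unfold rfac Ufn Vfn
      rw [show (j : ℝ) + 1 + (ν - 1) = (j : ℝ) + ν by ring,
        show ((n - j : ℕ) : ℝ) + 1 + (1 - ν - 1) = ((n - j : ℕ) : ℝ) + 1 - ν by ring]
      ring
  rw [hre, ← Finset.sum_div, key_sum ν h1 h2 n]
  field_simp

theorem stmt7 (ν : ℝ) (h1 : 0 < ν) (h2 : ν < 1) (a : ℤ) (t : ℤ) (ht : a + 1 ≤ t) :
    ndiff ν (a - 1) (fun s => rfac ((s : ℝ) - (a : ℝ) + 1) (ν - 1) / Real.Gamma ν) t = 0 := by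
  unfold ndiff nbl
  rw [nsum_eq_one ν h1 h2 a t (by omega), nsum_eq_one ν h1 h2 a (t - 1) (by omega)]
  ring
end

section
/- Let $0<\nu<1$, $a\in\mathbb{Z}$, $p:\mathbb{N}_a\to(0,\infty)$, and $K>0$. Suppose $F:\mathbb{N}_{a+1}\times[0,\infty)\to[0,\infty)$ satisfies $|F(t,u)-F(t,v)|\le K|u-v|$. Define the operator $T$ on $\zeta_M := \{y:\mathbb{N}_{a-1}\to[M,\infty): \nabla y\le 0 \text{ on } \mathbb{N}_a,\ \nabla y(a)=0\}$ by $(Ty)(t) := M + \sum_{s=t+1}^{\infty}\frac{1}{p(s)}\sum_{\tau=a+1}^{s}\frac{(s-\tau+1)^{\overline{\nu-1}}}{\Gamma(\nu)}F(\tau,y(\tau-1))$, assuming the series converges for every $y\in\zeta_M$. Then $T$ maps $\zeta_M$ into $\zeta_M$, and for all $x,y\in\zeta_M$, $\sup_t|(Tx)(t)-(Ty)(t)| \le \frac{K}{\Gamma(\nu+1)}\Big(\sum_{s=a+1}^{\infty}\frac{(s-a)^{\overline{\nu}}}{p(s)}\Big)\sup_t|x(t)-y(t)|$. -/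
open Filter Finset

/-- The set `ζ_M` of functions on `ℕ_{a-1}` with values in `[M,∞)`, nonincreasing on
`ℕ_a`, and with `∇y(a) = 0`, as a predicate on functions `ℤ → ℝ`. -/
def zetaM (a : ℤ) (M : ℝ) (y : ℤ → ℝ) : Prop :=
  (∀ t, a - 1 ≤ t → M ≤ y t) ∧ (∀ t, a ≤ t → nbl y t ≤ 0) ∧ nbl y a = 0

/-- The operator `(Ty)(t) = M + ∑_{s=t+1}^∞ (1/p(s)) ∑_{τ=a+1}^{s}
((s-τ+1)^{ν-1̄}/Γ(ν)) F(τ, y(τ-1))`. -/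
noncomputable def Tmap (ν : ℝ) (a : ℤ) (p : ℤ → ℝ) (F : ℤ → ℝ → ℝ) (M : ℝ)
    (y : ℤ → ℝ) (t : ℤ) : ℝ :=
  M + ∑' k : ℕ, (1 / p (t + 1 + k)) * ∑ τ ∈ Finset.Icc (a + 1) (t + 1 + (k : ℤ)),
    rfac ((t : ℝ) + 1 + (k : ℝ) - (τ : ℝ) + 1) (ν - 1) / Real.Gamma ν * F τ (y (τ - 1))

lemma rfac_zero (r : ℝ) : rfac 0 r = 0 := by simp [rfac, Real.Gamma_zero]

lemma rfac_pos {x r : ℝ} (hx : 0 < x) (hxr : 0 < x + r) : 0 < rfac x r :=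
  div_pos (Real.Gamma_pos_of_pos hxr) (Real.Gamma_pos_of_pos hx)

lemma rfac_step {ν : ℝ} (hν : 0 < ν) (n : ℕ) :
    rfac ((n : ℝ) + 1) ν / Real.Gamma (ν + 1)
      = rfac (n : ℝ) ν / Real.Gamma (ν + 1) + rfac ((n : ℝ) + 1) (ν - 1) / Real.Gamma ν := by
  have hΓν : Real.Gamma ν ≠ 0 := (Real.Gamma_pos_of_pos hν).ne'
  have hΓν1 : Real.Gamma (ν + 1) = ν * Real.Gamma ν := Real.Gamma_add_one hν.ne'
  cases n with
  | zero =>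
      simp [rfac, Real.Gamma_zero, Real.Gamma_one, hΓν1]
      rw [add_comm 1 ν, Real.Gamma_add_one hν.ne', div_self hΓν,
        div_self (by positivity : ν * Real.Gamma ν ≠ 0)]
  | succ m =>
      have hm : (0:ℝ) < (m : ℝ) + 1 := by positivity
      have hmg : (0:ℝ) < Real.Gamma ((m : ℝ) + 1) := Real.Gamma_pos_of_pos hm
      have hmν : (0:ℝ) < (m : ℝ) + 1 + ν := by positivity
      have hmνg : (0:ℝ) < Real.Gamma ((m : ℝ) + 1 + ν) := Real.Gamma_pos_of_pos hmν
      have e1 : Real.Gamma ((m : ℝ) + 1 + 1) = ((m:ℝ)+1) * Real.Gamma ((m:ℝ)+1) :=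
        Real.Gamma_add_one hm.ne'
      have e2 : Real.Gamma ((m : ℝ) + 1 + 1 + ν) = ((m:ℝ)+1+ν) * Real.Gamma ((m:ℝ)+1+ν) := by
        rw [show (m:ℝ)+1+1+ν = ((m:ℝ)+1+ν)+1 by ring]
        exact Real.Gamma_add_one hmν.ne'
      push_cast
      rw [rfac, rfac, rfac, show (m:ℝ)+1+1+(ν-1) = (m:ℝ)+1+ν by ring, e1, e2, hΓν1]
      field_simp

lemma rfac_sum_range {ν : ℝ} (hν : 0 < ν) (n : ℕ) :
    ∑ j ∈ Finset.range n, rfac ((j:ℝ) + 1) (ν-1) / Real.Gamma ν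
      = rfac (n:ℝ) ν / Real.Gamma (ν+1) := by
  induction n with
  | zero => simp [rfac_zero]
  | succ m ih =>
      rw [Finset.sum_range_succ, ih]
      push_cast
      exact (rfac_step hν m).symm

lemma rfac_sum {ν : ℝ} (hν : 0 < ν) (a s : ℤ) (hs : a ≤ s) :
    (∑ τ ∈ Icc (a+1) s, rfac ((s:ℝ) - (τ:ℝ) + 1) (ν-1) / Real.Gamma ν)
      = rfac (((s - a : ℤ) : ℝ)) ν / Real.Gamma (ν + 1) := by
  have hcast : ((s - a : ℤ) : ℝ) = (((s-a).toNat : ℕ) : ℝ) := by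
    exact_mod_cast (congrArg (Int.cast : ℤ → ℝ) (Int.toNat_of_nonneg (by omega : (0:ℤ) ≤ s - a))).symm
  rw [hcast, ← rfac_sum_range hν (s - a).toNat]
  refine Finset.sum_nbij' (fun τ => (s - τ).toNat) (fun j => s - j) ?_ ?_ ?_ ?_ ?_
  · intro τ hτ; simp only [Finset.mem_Icc] at hτ; simp only [Finset.mem_range]; omega
  · intro j hj; simp only [Finset.mem_range] at hj; simp only [Finset.mem_Icc]; omega
  · intro τ hτ; simp only [Finset.mem_Icc] at hτ; omega
  · intro j hj; simp only [Finset.mem_range] at hj; omega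
  · intro τ hτ; simp only [Finset.mem_Icc] at hτ
    have : ((s - τ).toNat : ℤ) = s - τ := Int.toNat_of_nonneg (by omega)
    have h2 : (((s - τ).toNat : ℕ) : ℝ) = (s:ℝ) - τ := by
      exact_mod_cast congrArg (Int.cast : ℤ → ℝ) this
    rw [h2]

noncomputable def Gaux (ν : ℝ) (a : ℤ) (p : ℤ → ℝ) (F : ℤ → ℝ → ℝ)
    (y : ℤ → ℝ) (t : ℤ) (k : ℕ) : ℝ :=
  (1 / p (t + 1 + k)) * ∑ τ ∈ Finset.Icc (a + 1) (t + 1 + (k : ℤ)),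
    rfac ((t : ℝ) + 1 + (k : ℝ) - (τ : ℝ) + 1) (ν - 1) / Real.Gamma ν * F τ (y (τ - 1))

lemma Tmap_eq (ν : ℝ) (a : ℤ) (p : ℤ → ℝ) (F : ℤ → ℝ → ℝ) (M : ℝ) (y : ℤ → ℝ) (t : ℤ) :
    Tmap ν a p F M y t = M + ∑' k : ℕ, Gaux ν a p F y t k := rfl

lemma Gaux_shift (ν : ℝ) (a : ℤ) (p : ℤ → ℝ) (F : ℤ → ℝ → ℝ) (y : ℤ → ℝ) (t : ℤ) (k : ℕ) :
    Gaux ν a p F y (t - 1) (k + 1) = Gaux ν a p F y t k := by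
  unfold Gaux
  have h1 : t - 1 + 1 + ((k:ℤ) + 1) = t + 1 + k := by ring
  push_cast
  rw [h1]
  ring_nf
  congr 1
  apply Finset.sum_congr rfl
  intro x _
  ring

theorem stmt13 (ν : ℝ) (h1 : 0 < ν) (h2 : ν < 1) (a : ℤ) (p : ℤ → ℝ) (F : ℤ → ℝ → ℝ)
    (K M : ℝ) (hK : 0 < K) (hM : 0 ≤ M)
    (hp : ∀ t, a ≤ t → 0 < p t)
    (hF0 : ∀ t, a + 1 ≤ t → ∀ u : ℝ, 0 ≤ u → 0 ≤ F t u)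
    (hFlip : ∀ t, a + 1 ≤ t → ∀ u v : ℝ, 0 ≤ u → 0 ≤ v → |F t u - F t v| ≤ K * |u - v|)
    (hconv : ∀ y : ℤ → ℝ, zetaM a M y → ∀ t : ℤ, a - 1 ≤ t → Summable (fun k : ℕ =>
      (1 / p (t + 1 + k)) * ∑ τ ∈ Finset.Icc (a + 1) (t + 1 + (k : ℤ)),
        rfac ((t : ℝ) + 1 + (k : ℝ) - (τ : ℝ) + 1) (ν - 1) / Real.Gamma ν * F τ (y (τ - 1))))
    (hws : Summable (fun k : ℕ => rfac ((k : ℝ) + 1) ν / p (a + 1 + k))) :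
    (∀ y : ℤ → ℝ, zetaM a M y → zetaM a M (Tmap ν a p F M y)) ∧
    (∀ x y : ℤ → ℝ, zetaM a M x → zetaM a M y →
      ∀ C : ℝ, (∀ t, a - 1 ≤ t → |x t - y t| ≤ C) →
      ∀ t, a - 1 ≤ t →
        |Tmap ν a p F M x t - Tmap ν a p F M y t| ≤
          K / Real.Gamma (ν + 1) * (∑' k : ℕ, rfac ((k : ℝ) + 1) ν / p (a + 1 + k)) * C) := by
  have hΓν : 0 < Real.Gamma ν := Real.Gamma_pos_of_pos h1
  have hΓν1 : 0 < Real.Gamma (ν + 1) := Real.Gamma_pos_of_pos (by linarith)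
  have hconv' : ∀ y : ℤ → ℝ, zetaM a M y → ∀ t : ℤ, a - 1 ≤ t →
      Summable (fun k : ℕ => Gaux ν a p F y t k) := hconv
  -- nonnegativity of summands
  have hGnn : ∀ y : ℤ → ℝ, zetaM a M y → ∀ t : ℤ, a - 1 ≤ t → ∀ k : ℕ,
      0 ≤ Gaux ν a p F y t k := by
    intro y hy t ht k
    unfold Gaux
    apply mul_nonneg (one_div_nonneg.2 (hp _ (by omega)).le)
    apply Finset.sum_nonneg
    intro τ hτ
    rw [Finset.mem_Icc] at hτ
    apply mul_nonneg (div_nonneg ?_ hΓν.le)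
    · exact hF0 τ hτ.1 _ (le_trans hM (hy.1 _ (by omega)))
    · have hτle : (τ:ℝ) ≤ (t:ℝ) + 1 + (k:ℝ) := by exact_mod_cast hτ.2
      exact (rfac_pos (by linarith) (by linarith)).le
  constructor
  · -- T maps zetaM into zetaM
    intro y hy
    have key : ∀ t : ℤ, a ≤ t →
        Tmap ν a p F M y (t - 1) = Tmap ν a p F M y t + Gaux ν a p F y (t - 1) 0 := by
      intro t ht
      rw [Tmap_eq, Tmap_eq, Summable.tsum_eq_zero_add (hconv' y hy (t - 1) (by omega))]
      have : (∑' k : ℕ, Gaux ν a p F y (t - 1) (k + 1)) = ∑' k : ℕ, Gaux ν a p F y t k := by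
        congr 1; funext k; exact Gaux_shift ν a p F y t k
      rw [this]; ring
    refine ⟨?_, ?_, ?_⟩
    · intro t ht
      rw [Tmap_eq]
      exact le_add_of_nonneg_right (tsum_nonneg (hGnn y hy t ht))
    · intro t ht
      have := key t ht
      have h0 := hGnn y hy (t - 1) (by omega) 0
      unfold nbl
      linarith
    · have h0 : Gaux ν a p F y (a - 1) 0 = 0 := by
        unfold Gaux
        have : Finset.Icc (a + 1) (a - 1 + 1 + ((0:ℕ):ℤ)) = ∅ :=
          Finset.Icc_eq_empty (by omega)
        rw [this]
        simp
      have := key a le_rfl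
      unfold nbl
      rw [this, h0]
      ring
  · -- Lipschitz estimate
    intro x y hx hy C hC t ht
    have hC0 : 0 ≤ C := le_trans (abs_nonneg _) (hC (a - 1) le_rfl)
    have hsx := hconv' x hx t ht
    have hsy := hconv' y hy t ht
    set c : ℝ := K * C / Real.Gamma (ν + 1) with hc
    have hc0 : 0 ≤ c := by positivity
    set f : ℕ → ℝ := fun k => rfac ((t + 1 + (k:ℤ) - a : ℤ) : ℝ) ν / p (t + 1 + (k:ℤ)) with hf
    set g : ℕ → ℝ := fun k => rfac ((k : ℝ) + 1) ν / p (a + 1 + (k:ℤ)) with hg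
    -- pointwise bound
    have hpt : ∀ k : ℕ, |Gaux ν a p F x t k - Gaux ν a p F y t k| ≤ c * f k := by
      intro k
      set s : ℤ := t + 1 + (k:ℤ) with hs
      have hsa : a ≤ s := by omega
      have hps : 0 < p s := hp s (by omega)
      have hsr : (s : ℝ) = (t:ℝ) + 1 + (k:ℝ) := by rw [hs]; push_cast; ring
      have hd : Gaux ν a p F x t k - Gaux ν a p F y t k
          = (1 / p s) * ∑ τ ∈ Finset.Icc (a + 1) s,
            rfac ((s:ℝ) - (τ:ℝ) + 1) (ν - 1) / Real.Gamma ν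
              * (F τ (x (τ - 1)) - F τ (y (τ - 1))) := by
        unfold Gaux
        rw [← mul_sub, ← Finset.sum_sub_distrib]
        congr 1
        apply Finset.sum_congr rfl
        intro τ hτ
        rw [hsr, mul_sub]
      rw [hd, abs_mul, abs_of_nonneg (one_div_nonneg.2 hps.le)]
      have hsum_bound : |∑ τ ∈ Finset.Icc (a + 1) s,
          rfac ((s:ℝ) - (τ:ℝ) + 1) (ν - 1) / Real.Gamma ν
            * (F τ (x (τ - 1)) - F τ (y (τ - 1)))|
          ≤ ∑ τ ∈ Finset.Icc (a + 1) s,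
            rfac ((s:ℝ) - (τ:ℝ) + 1) (ν - 1) / Real.Gamma ν * (K * C) := by
        refine (Finset.abs_sum_le_sum_abs _ _).trans (Finset.sum_le_sum ?_)
        intro τ hτ
        rw [Finset.mem_Icc] at hτ
        have hrnn : 0 ≤ rfac ((s:ℝ) - (τ:ℝ) + 1) (ν - 1) / Real.Gamma ν := by
          have hτle : (τ:ℝ) ≤ (s:ℝ) := by exact_mod_cast hτ.2
          exact div_nonneg (rfac_pos (by linarith) (by linarith)).le hΓν.le
        rw [abs_mul, abs_of_nonneg hrnn]
        apply mul_le_mul_of_nonneg_left ?_ hrnn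
        have hxM : (0:ℝ) ≤ x (τ - 1) := le_trans hM (hx.1 _ (by omega))
        have hyM : (0:ℝ) ≤ y (τ - 1) := le_trans hM (hy.1 _ (by omega))
        refine (hFlip τ hτ.1 _ _ hxM hyM).trans ?_
        exact mul_le_mul_of_nonneg_left (hC (τ - 1) (by omega)) hK.le
      have hsum_eq : ∑ τ ∈ Finset.Icc (a + 1) s,
          rfac ((s:ℝ) - (τ:ℝ) + 1) (ν - 1) / Real.Gamma ν * (K * C)
          = rfac ((s - a : ℤ) : ℝ) ν / Real.Gamma (ν + 1) * (K * C) := by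
        rw [← Finset.sum_mul, rfac_sum h1 a s hsa]
      calc 1 / p s * |∑ τ ∈ Finset.Icc (a + 1) s,
            rfac ((s:ℝ) - (τ:ℝ) + 1) (ν - 1) / Real.Gamma ν
              * (F τ (x (τ - 1)) - F τ (y (τ - 1)))|
          ≤ 1 / p s * (rfac ((s - a : ℤ) : ℝ) ν / Real.Gamma (ν + 1) * (K * C)) := by
            apply mul_le_mul_of_nonneg_left _ (one_div_nonneg.2 hps.le)
            rw [← hsum_eq]; exact hsum_bound
        _ = c * f k := by rw [hc, hf]; dsimp only; rw [← hs]; ring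
    -- comparing ∑ f with ∑ g
    have hgnn : ∀ j : ℕ, 0 ≤ g j := by
      intro j
      refine div_nonneg (rfac_pos (by positivity) (by positivity)).le (hp _ (by omega)).le
    have hfg_cmp : Summable f ∧ (∑' k, f k) ≤ ∑' k, g k := by
      have hm0 : 0 ≤ t + 1 - a := by omega
      set m : ℕ := (t + 1 - a).toNat with hmdef
      have hm' : (m : ℤ) = t + 1 - a := Int.toNat_of_nonneg hm0
      rcases Nat.eq_zero_or_pos m with hm | hm
      · -- t + 1 = a
        have hta : t + 1 = a := by omega
        have hfg : ∀ k : ℕ, f (k + 1) = g k := by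
          intro k
          rw [hf, hg]
          dsimp only
          have e1 : t + 1 + ((k:ℕ)+1 : ℕ) - a = (k : ℤ) + 1 := by push_cast; omega
          have e2 : t + 1 + (((k:ℕ)+1 : ℕ) : ℤ) = a + 1 + (k : ℤ) := by push_cast; omega
          rw [e2]
          congr 1
          push_cast
          ring
        have hf0 : f 0 = 0 := by
          rw [hf]
          have : t + 1 + ((0:ℕ):ℤ) - a = 0 := by omega
          simp only [this]
          rw [Int.cast_zero, rfac_zero, zero_div]
        have hfs : Summable f := by
          rw [← summable_nat_add_iff 1]
          exact hws.congr fun k => (hfg k).symm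
        refine ⟨hfs, ?_⟩
        rw [Summable.tsum_eq_zero_add hfs, hf0, zero_add]
        exact le_of_eq (tsum_congr hfg)
      · -- t + 1 ≥ a + 1
        have hfg : ∀ k : ℕ, f k = g (m - 1 + k) := by
          intro k
          rw [hf, hg]
          dsimp only
          have e2 : t + 1 + (k : ℤ) = a + 1 + ((m - 1 + k : ℕ) : ℤ) := by
            push_cast; omega
          rw [e2]
          congr 1
          push_cast
          ring
        have hfs : Summable f :=
          (hws.comp_injective (add_right_injective (m - 1))).congr fun k => (hfg k).symm
        refine ⟨hfs, ?_⟩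
        refine Summable.tsum_le_tsum_of_inj (fun k => m - 1 + k) (add_right_injective (m - 1))
          (fun c _ => hgnn c) (fun n => (hfg n).le) hfs hws
    obtain ⟨hfs, hfle⟩ := hfg_cmp
    have hbs : Summable (fun k => c * f k) := hfs.mul_left c
    have habs : Summable (fun k => |Gaux ν a p F x t k - Gaux ν a p F y t k|) :=
      Summable.of_nonneg_of_le (fun k => abs_nonneg _) hpt hbs
    have hTsub : Tmap ν a p F M x t - Tmap ν a p F M y t
        = ∑' k : ℕ, (Gaux ν a p F x t k - Gaux ν a p F y t k) := by
      rw [Tmap_eq, Tmap_eq, Summable.tsum_sub hsx hsy]; ring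
    rw [hTsub]
    have habs' : Summable fun k : ℕ => ‖Gaux ν a p F x t k - Gaux ν a p F y t k‖ := by
      simpa only [Real.norm_eq_abs] using habs
    have hnorm := norm_tsum_le_tsum_norm habs'
    simp only [Real.norm_eq_abs] at hnorm
    calc |∑' k : ℕ, (Gaux ν a p F x t k - Gaux ν a p F y t k)|
        ≤ ∑' k : ℕ, |Gaux ν a p F x t k - Gaux ν a p F y t k| := hnorm
      _ ≤ ∑' k : ℕ, c * f k := Summable.tsum_le_tsum hpt habs hbs
      _ = c * ∑' k, f k := tsum_mul_left
      _ ≤ c * ∑' k, g k := mul_le_mul_of_nonneg_left hfle hc0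
      _ = K / Real.Gamma (ν + 1) * (∑' k : ℕ, rfac ((k : ℝ) + 1) ν / p (a + 1 + k)) * C := by
          rw [hc]
          have : (∑' k, g k) = ∑' k : ℕ, rfac ((k : ℝ) + 1) ν / p (a + 1 + k) := rfl
          rw [this]; ring
end

section
/- Let $0<\nu<1$, $a\in\mathbb{Z}$, $p:\mathbb{N}_a\to(0,\infty)$, $q:\mathbb{N}_{a+1}\to\mathbb{R}$, $f:\mathbb{N}_{a+1}\to\mathbb{R}$, and $M\ge 0$. A function $y:\mathbb{N}_{a-1}\to\mathbb{R}$ with $\lim_{t\to\infty}y(t)=M$ and $\nabla y(a)=0$ solves $\nabla_{a-1}^{\nu}(p\nabla y)(t)+q(t)y(t-1)=f(t)$ for all $t\in\mathbb{N}_{a+1}$ if and only if $y(t)=M+\sum_{s=t+1}^{\infty}\frac{1}{p(s)}\sum_{\tau=a+1}^{s}\frac{(s-\tau+1)^{\overline{\nu-1}}}{\Gamma(\nu)}\big(q(\tau)y(\tau-1)-f(\tau)\big)$ for all $t\in\mathbb{N}_{a-1}$ (with the relevant series converging). -/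
open Filter Finset

noncomputable def cc (α : ℝ) (j : ℕ) : ℝ :=
  Real.Gamma (j + α) / (Real.Gamma (j + 1) * Real.Gamma α)

lemma cc_zero (α : ℝ) (h : 0 < α) : cc α 0 = 1 := by
  have hα := (Real.Gamma_pos_of_pos h).ne'
  simp [cc, Real.Gamma_one, div_self hα]

lemma gamma_nat_succ_ne (j : ℕ) : Real.Gamma ((j:ℝ) + 1) ≠ 0 :=
  (Real.Gamma_pos_of_pos (by positivity)).ne'

lemma cc_rec (α : ℝ) (hα : 0 < α) (j : ℕ) (h : (j:ℝ) + α ≠ 0) :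
    ((j:ℝ) + 1) * cc α (j+1) = ((j:ℝ) + α) * cc α j := by
  have h1 : Real.Gamma ((j:ℝ) + 1 + α) = ((j:ℝ)+α) * Real.Gamma ((j:ℝ)+α) := by
    rw [show (j:ℝ)+1+α = ((j:ℝ)+α)+1 by ring, Real.Gamma_add_one h]
  have h2 : Real.Gamma ((j:ℝ) + 1 + 1) = ((j:ℝ)+1) * Real.Gamma ((j:ℝ)+1) := by
    rw [Real.Gamma_add_one (by positivity)]
  have h3 : ((j:ℝ)+1) ≠ 0 := by positivity
  have h4 := gamma_nat_succ_ne j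
  have h5 := (Real.Gamma_pos_of_pos hα).ne'
  unfold cc
  push_cast
  rw [h1, h2]
  field_simp

lemma vander (ν : ℝ) (h1 : 0 < ν) (h2 : ν < 1) (m : ℕ) :
    ∑ x ∈ Finset.HasAntidiagonal.antidiagonal m, cc ν x.1 * cc (1-ν) x.2 = 1 := by
  induction m with
  | zero => simp [cc_zero ν h1, cc_zero (1-ν) (by linarith)]
  | succ m ih =>
    have hm1 : ((m:ℝ)+1) ≠ 0 := by positivity
    apply mul_left_cancel₀ hm1
    have e1 : ∑ x ∈ Finset.HasAntidiagonal.antidiagonal (m+1), (x.1:ℝ) * cc ν x.1 * cc (1-ν) x.2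
        = ∑ x ∈ Finset.HasAntidiagonal.antidiagonal m, ((x.1:ℝ)+ν) * cc ν x.1 * cc (1-ν) x.2 := by
      rw [Finset.Nat.antidiagonal_succ, Finset.sum_cons, Finset.sum_map]
      simp only [Nat.cast_zero, zero_mul, zero_add]
      apply Finset.sum_congr rfl
      intro x hx
      simp only [Function.Embedding.coe_prodMap, Function.Embedding.coeFn_mk,
        Function.Embedding.refl_apply, Prod.map_fst, Prod.map_snd]
      have : ((Nat.succ x.1 : ℕ):ℝ) = (x.1:ℝ) + 1 := by push_cast; ring
      rw [this, mul_comm ((x.1:ℝ)+1) (cc ν (Nat.succ x.1))]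
      rw [show cc ν (Nat.succ x.1) = cc ν (x.1 + 1) from rfl]
      rw [mul_comm (cc ν (x.1+1)) ((x.1:ℝ)+1), cc_rec ν h1 x.1 (by positivity)]
    have e2 : ∑ x ∈ Finset.HasAntidiagonal.antidiagonal (m+1), cc ν x.1 * ((x.2:ℝ) * cc (1-ν) x.2)
        = ∑ x ∈ Finset.HasAntidiagonal.antidiagonal m, cc ν x.1 * (((x.2:ℝ)+(1-ν)) * cc (1-ν) x.2) := by
      rw [Finset.Nat.antidiagonal_succ', Finset.sum_cons, Finset.sum_map]
      simp only [Nat.cast_zero, zero_mul, mul_zero, zero_add]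
      apply Finset.sum_congr rfl
      intro x hx
      simp only [Function.Embedding.coe_prodMap, Function.Embedding.coeFn_mk,
        Function.Embedding.refl_apply, Prod.map_fst, Prod.map_snd]
      have : ((Nat.succ x.2 : ℕ):ℝ) = (x.2:ℝ) + 1 := by push_cast; ring
      rw [this]
      congr 1
      rw [show cc (1-ν) (Nat.succ x.2) = cc (1-ν) (x.2 + 1) from rfl,
        cc_rec (1-ν) (by linarith) x.2 (by push_cast; nlinarith [Nat.cast_nonneg (α := ℝ) x.2])]
    calc ((m:ℝ)+1) * ∑ x ∈ Finset.HasAntidiagonal.antidiagonal (m+1), cc ν x.1 * cc (1-ν) x.2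
        = ∑ x ∈ Finset.HasAntidiagonal.antidiagonal (m+1),
            ((x.1:ℝ) * cc ν x.1 * cc (1-ν) x.2 + cc ν x.1 * ((x.2:ℝ) * cc (1-ν) x.2)) := by
          rw [Finset.mul_sum]
          apply Finset.sum_congr rfl
          intro x hx
          have hm : x.1 + x.2 = m + 1 := Finset.HasAntidiagonal.mem_antidiagonal.mp hx
          have hm' : (x.1:ℝ) + (x.2:ℝ) = (m:ℝ) + 1 := by exact_mod_cast hm
          rw [← hm']; ring
      _ = (∑ x ∈ Finset.HasAntidiagonal.antidiagonal (m+1), (x.1:ℝ) * cc ν x.1 * cc (1-ν) x.2)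
          + ∑ x ∈ Finset.HasAntidiagonal.antidiagonal (m+1), cc ν x.1 * ((x.2:ℝ) * cc (1-ν) x.2) :=
          Finset.sum_add_distrib
      _ = (∑ x ∈ Finset.HasAntidiagonal.antidiagonal m, ((x.1:ℝ)+ν) * cc ν x.1 * cc (1-ν) x.2)
          + ∑ x ∈ Finset.HasAntidiagonal.antidiagonal m, cc ν x.1 * (((x.2:ℝ)+(1-ν)) * cc (1-ν) x.2) := by
          rw [e1, e2]
      _ = ∑ x ∈ Finset.HasAntidiagonal.antidiagonal m, ((m:ℝ)+1) * (cc ν x.1 * cc (1-ν) x.2) := by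
          rw [← Finset.sum_add_distrib]
          apply Finset.sum_congr rfl
          intro x hx
          have hm : x.1 + x.2 = m := Finset.HasAntidiagonal.mem_antidiagonal.mp hx
          have hm' : (x.1:ℝ) + (x.2:ℝ) = (m:ℝ) := by exact_mod_cast hm
          rw [show ((m:ℝ)+1) = (x.1:ℝ) + (x.2:ℝ) + 1 by rw [hm']]; ring
      _ = ((m:ℝ)+1) * ∑ x ∈ Finset.HasAntidiagonal.antidiagonal m, cc ν x.1 * cc (1-ν) x.2 :=
          (Finset.mul_sum _ _ _).symm
      _ = ((m:ℝ)+1) * 1 := by rw [ih]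

lemma kernel (μ : ℝ) (n : ℤ) (hn : 0 ≤ n) :
    rfac ((n:ℝ)+1) (μ-1) / Real.Gamma μ = cc μ n.toNat := by
  have hc : ((n.toNat : ℕ) : ℝ) = (n:ℝ) := by exact_mod_cast Int.toNat_of_nonneg hn
  unfold rfac cc
  rw [show (n:ℝ)+1+(μ-1) = (n:ℝ)+μ by ring, div_div, hc]

lemma innerconv (ν : ℝ) (h1 : 0 < ν) (h2 : ν < 1) (τ t : ℤ) (h : τ ≤ t) :
    ∑ s ∈ Finset.Icc τ t, cc (1-ν) ((t-s).toNat) * cc ν ((s-τ).toNat) = 1 := by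
  rw [Finset.sum_nbij' (i := fun s : ℤ => ((s-τ).toNat, (t-s).toNat))
    (j := fun x : ℕ × ℕ => τ + x.1) (t := Finset.HasAntidiagonal.antidiagonal (t-τ).toNat)
    (g := fun x : ℕ × ℕ => cc ν x.1 * cc (1-ν) x.2)]
  · exact vander ν h1 h2 _
  · intro s hs
    simp only [Finset.mem_Icc] at hs
    simp only [Finset.HasAntidiagonal.mem_antidiagonal]
    omega
  · intro x hx
    simp only [Finset.HasAntidiagonal.mem_antidiagonal] at hx
    simp only [Finset.mem_Icc]
    omega
  · intro s hs
    simp only [Finset.mem_Icc] at hs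
    omega
  · intro x hx
    simp only [Finset.HasAntidiagonal.mem_antidiagonal] at hx
    simp only [Prod.ext_iff]
    omega
  · intro s hs
    exact mul_comm _ _

noncomputable def Sf (ν : ℝ) (a : ℤ) (g : ℤ → ℝ) (s : ℤ) : ℝ :=
  ∑ τ ∈ Finset.Icc (a+1) s, cc ν ((s-τ).toNat) * g τ

lemma conv (ν : ℝ) (h1 : 0 < ν) (h2 : ν < 1) (a : ℤ) (g : ℤ → ℝ) (t : ℤ) :
    ∑ s ∈ Finset.Icc a t, cc (1-ν) ((t-s).toNat) * Sf ν a g s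
      = ∑ τ ∈ Finset.Icc (a+1) t, g τ := by
  unfold Sf
  simp_rw [Finset.mul_sum]
  rw [Finset.sum_comm' (t' := Finset.Icc (a+1) t) (s' := fun τ => Finset.Icc τ t)
    (by intro s τ; simp only [Finset.mem_Icc]; omega)]
  apply Finset.sum_congr rfl
  intro τ hτ
  simp only [Finset.mem_Icc] at hτ
  have : ∀ s ∈ Finset.Icc τ t,
      cc (1-ν) ((t-s).toNat) * (cc ν ((s-τ).toNat) * g τ)
        = (cc (1-ν) ((t-s).toNat) * cc ν ((s-τ).toNat)) * g τ := by
    intro s _; ring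
  rw [Finset.sum_congr rfl this, ← Finset.sum_mul, innerconv ν h1 h2 τ t hτ.2, one_mul]

lemma Icc_sum_succ (a t : ℤ) (h : a ≤ t + 1) (f : ℤ → ℝ) :
    ∑ s ∈ Finset.Icc a (t+1), f s = (∑ s ∈ Finset.Icc a t, f s) + f (t+1) := by
  have : Finset.Icc a (t+1) = insert (t+1) (Finset.Icc a t) := by
    ext x; simp only [Finset.mem_Icc, Finset.mem_insert]; omega
  rw [this, Finset.sum_insert (by simp only [Finset.mem_Icc]; omega)]
  ring

lemma nsum_eq (ν : ℝ) (a : ℤ) (hh : ℤ → ℝ) (t : ℤ) :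
    nsum (1-ν) (a-1) hh t = ∑ s ∈ Finset.Icc a t, cc (1-ν) ((t-s).toNat) * hh s := by
  unfold nsum
  rw [show a - 1 + 1 = a by ring, Finset.mul_sum]
  apply Finset.sum_congr rfl
  intro s hs
  simp only [Finset.mem_Icc] at hs
  have e : (t:ℝ) - (s:ℝ) + 1 = ((t - s : ℤ):ℝ) + 1 := by push_cast; ring
  rw [e, one_div, ← mul_assoc, inv_mul_eq_div, kernel (1-ν) (t-s) (by omega)]

theorem stmt15 (ν : ℝ) (h1 : 0 < ν) (h2 : ν < 1) (a : ℤ) (p q f : ℤ → ℝ) (M : ℝ)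
    (hM : 0 ≤ M) (hp : ∀ t, a ≤ t → 0 < p t)
    (y : ℤ → ℝ)
    (hlim : Filter.Tendsto y Filter.atTop (nhds M))
    (hnab : nbl y a = 0)
    (hconv : ∀ t : ℤ, a - 1 ≤ t → Summable (fun k : ℕ =>
      (1 / p (t + 1 + k)) * ∑ τ ∈ Finset.Icc (a + 1) (t + 1 + (k : ℤ)),
        rfac ((t : ℝ) + 1 + (k : ℝ) - (τ : ℝ) + 1) (ν - 1) / Real.Gamma ν *
          (q τ * y (τ - 1) - f τ))) :
    (∀ t, a + 1 ≤ t →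
      ndiff ν (a - 1) (fun s => p s * nbl y s) t + q t * y (t - 1) = f t) ↔
    (∀ t, a - 1 ≤ t → y t = M + ∑' k : ℕ,
      (1 / p (t + 1 + k)) * ∑ τ ∈ Finset.Icc (a + 1) (t + 1 + (k : ℤ)),
        rfac ((t : ℝ) + 1 + (k : ℝ) - (τ : ℝ) + 1) (ν - 1) / Real.Gamma ν *
          (q τ * y (τ - 1) - f τ)) := by
  set g : ℤ → ℝ := fun τ => q τ * y (τ - 1) - f τ with hgdef
  -- the goal summand equals Sf/p
  have hterm : ∀ (t : ℤ) (k : ℕ),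
      (1 / p (t + 1 + k)) * ∑ τ ∈ Finset.Icc (a + 1) (t + 1 + (k : ℤ)),
        rfac ((t : ℝ) + 1 + (k : ℝ) - (τ : ℝ) + 1) (ν - 1) / Real.Gamma ν *
          (q τ * y (τ - 1) - f τ)
      = Sf ν a g (t + 1 + k) / p (t + 1 + k) := by
    intro t k
    rw [one_div_mul_eq_div]
    congr 1
    unfold Sf
    apply Finset.sum_congr rfl
    intro τ hτ
    simp only [Finset.mem_Icc] at hτ
    have e : (t:ℝ) + 1 + (k:ℝ) - (τ:ℝ) + 1 = ((t + 1 + (k:ℤ) - τ : ℤ):ℝ) + 1 := by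
      push_cast; ring
    rw [e, kernel ν (t + 1 + (k:ℤ) - τ) (by omega)]
  have hconv' : ∀ t : ℤ,
      ∑ s ∈ Finset.Icc a t, cc (1-ν) ((t-s).toNat) * Sf ν a g s
        = ∑ τ ∈ Finset.Icc (a+1) t, g τ := conv ν h1 h2 a g
  constructor
  · -- equation implies representation
    intro heq
    -- Step 1: the fractional sum of p∇y equals -∑ g
    have hNG : ∀ t : ℤ, a ≤ t →
        ∑ s ∈ Finset.Icc a t, cc (1-ν) ((t-s).toNat) * (p s * nbl y s)
          = -∑ τ ∈ Finset.Icc (a+1) t, g τ := by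
      intro t ht
      refine Int.le_induction (motive := fun t _ =>
        ∑ s ∈ Finset.Icc a t, cc (1-ν) ((t-s).toNat) * (p s * nbl y s)
          = -∑ τ ∈ Finset.Icc (a+1) t, g τ) ?_ ?_ t ht
      · rw [show Finset.Icc a a = {a} from by
          ext x; simp only [Finset.mem_Icc, Finset.mem_singleton]; omega]
        rw [show Finset.Icc (a+1) a = ∅ from by
          ext x; simp only [Finset.mem_Icc, Finset.notMem_empty, iff_false]; omega]
        simp [hnab]
      · intro t ht ih
        have he := heq (t+1) (by omega)
        unfold ndiff at he
        rw [nbl] at he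
        rw [show t + 1 - 1 = t from by ring] at he
        rw [nsum_eq ν a _ (t+1), nsum_eq ν a _ t] at he
        rw [Icc_sum_succ (a+1) t (by omega) g]
        have hg1 : g (t+1) = q (t+1) * y t - f (t+1) := by
          rw [hgdef]; simp only; rw [show t+1-1 = t from by ring]
        linarith [he, ih, hg1]
    -- Step 2: unitriangular inversion
    have hhS : ∀ s : ℤ, a ≤ s → p s * nbl y s = - Sf ν a g s := by
      have key : ∀ t : ℤ, a ≤ t → ∀ s : ℤ, a ≤ s → s ≤ t →
          p s * nbl y s = - Sf ν a g s := by
        intro t ht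
        refine Int.le_induction (motive := fun t _ => ∀ s : ℤ, a ≤ s → s ≤ t →
          p s * nbl y s = - Sf ν a g s) ?_ ?_ t ht
        · intro s hs hs'
          have hsa : s = a := le_antisymm hs' hs
          rw [hsa, hnab, mul_zero, show Sf ν a g a = 0 from by
            unfold Sf
            rw [show Finset.Icc (a+1) a = ∅ from by
              ext x; simp only [Finset.mem_Icc, Finset.notMem_empty, iff_false]; omega]
            simp]
          ring
        · intro t ht ih s hs hst
          rcases eq_or_lt_of_le hst with hEq | hlt
          · rw [hEq]
            have h0 := hNG (t+1) (by omega)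
            rw [Icc_sum_succ a t (by omega)] at h0
            have h3 := hconv' (t+1)
            rw [Icc_sum_succ a t (by omega)] at h3
            simp only [show t+1-(t+1) = (0:ℤ) from by ring, Int.toNat_zero,
              cc_zero (1-ν) (by linarith), one_mul] at h0 h3
            have e1 : ∑ s ∈ Finset.Icc a t, cc (1-ν) ((t+1-s).toNat) * (p s * nbl y s)
                = -∑ s ∈ Finset.Icc a t, cc (1-ν) ((t+1-s).toNat) * Sf ν a g s := by
              rw [← Finset.sum_neg_distrib]
              apply Finset.sum_congr rfl
              intro x hx
              simp only [Finset.mem_Icc] at hx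
              rw [ih x hx.1 hx.2]; ring
            rw [e1] at h0
            linarith [h0, h3]
          · exact ih s hs (by omega)
      intro s hs
      exact key s hs s hs le_rfl
    -- Step 3: pass to the limit
    intro t ht
    have hsum := hconv t ht
    have hterm2 : ∀ k : ℕ, Sf ν a g (t + 1 + (k:ℤ)) / p (t + 1 + (k:ℤ))
        = y (t + (k:ℤ)) - y (t + 1 + (k:ℤ)) := by
      intro k
      have hk : a ≤ t + 1 + (k:ℤ) := by omega
      have hpk := (hp _ hk).ne'
      have h6 : Sf ν a g (t+1+(k:ℤ)) = p (t+1+(k:ℤ)) * (y (t+(k:ℤ)) - y (t+1+(k:ℤ))) := by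
        have h5 := hhS (t+1+(k:ℤ)) hk
        rw [nbl, show t+1+(k:ℤ)-1 = t+(k:ℤ) from by ring] at h5
        linear_combination h5
      rw [h6, mul_div_cancel_left₀ _ hpk]
    have hpartial : ∀ n : ℕ, (∑ k ∈ Finset.range n,
        (1 / p (t + 1 + k)) * ∑ τ ∈ Finset.Icc (a + 1) (t + 1 + (k : ℤ)),
          rfac ((t : ℝ) + 1 + (k : ℝ) - (τ : ℝ) + 1) (ν - 1) / Real.Gamma ν *
            (q τ * y (τ - 1) - f τ))
        = y t - y (t + (n:ℤ)) := by
      intro n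
      have e : ∀ k ∈ Finset.range n,
          (1 / p (t + 1 + k)) * ∑ τ ∈ Finset.Icc (a + 1) (t + 1 + (k : ℤ)),
            rfac ((t : ℝ) + 1 + (k : ℝ) - (τ : ℝ) + 1) (ν - 1) / Real.Gamma ν *
              (q τ * y (τ - 1) - f τ)
          = (fun k : ℕ => y (t + (k:ℤ))) k - (fun k : ℕ => y (t + (k:ℤ))) (k+1) := by
        intro k _
        rw [hterm t k, hterm2 k]
        simp only
        congr 2
        push_cast; ring
      rw [Finset.sum_congr rfl e, Finset.sum_range_sub']
      simp
    have hlim2 : Filter.Tendsto (fun n : ℕ => y (t + (n:ℤ))) Filter.atTop (nhds M) := by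
      apply hlim.comp
      exact tendsto_atTop_add_const_left _ t tendsto_natCast_atTop_atTop
    have h4 := hsum.hasSum.tendsto_sum_nat
    have h5 : Filter.Tendsto (fun n : ℕ => ∑ k ∈ Finset.range n,
        (1 / p (t + 1 + k)) * ∑ τ ∈ Finset.Icc (a + 1) (t + 1 + (k : ℤ)),
          rfac ((t : ℝ) + 1 + (k : ℝ) - (τ : ℝ) + 1) (ν - 1) / Real.Gamma ν *
            (q τ * y (τ - 1) - f τ)) Filter.atTop (nhds (y t - M)) := by
      have e : (fun n : ℕ => ∑ k ∈ Finset.range n,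
          (1 / p (t + 1 + k)) * ∑ τ ∈ Finset.Icc (a + 1) (t + 1 + (k : ℤ)),
            rfac ((t : ℝ) + 1 + (k : ℝ) - (τ : ℝ) + 1) (ν - 1) / Real.Gamma ν *
              (q τ * y (τ - 1) - f τ))
          = fun n : ℕ => y t - y (t + (n:ℤ)) := funext hpartial
      rw [e]
      exact tendsto_const_nhds.sub hlim2
    have h6 := tendsto_nhds_unique h4 h5
    linarith [h6]
  · -- representation implies equation
    intro hF
    have hhS : ∀ s : ℤ, a ≤ s → p s * nbl y s = - Sf ν a g s := by
      intro s hs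
      have hps := (hp s hs).ne'
      have e1 := hF s (by omega)
      have e2 := hF (s-1) (by omega)
      rw [tsum_congr (hterm s)] at e1
      rw [tsum_congr (hterm (s-1))] at e2
      rw [show s - 1 + 1 = s from by ring] at e2
      have hB : Summable (fun k : ℕ => Sf ν a g (s + (k:ℤ)) / p (s + (k:ℤ))) := by
        have hB0 := (summable_congr (hterm (s-1))).mp (hconv (s-1) (by omega))
        rw [show s - 1 + 1 = s from by ring] at hB0
        exact hB0
      have hshift := Summable.tsum_eq_zero_add hB
      have e4 : ∑' (k:ℕ), Sf ν a g (s + ((k:ℕ)+1:ℕ)) / p (s + ((k:ℕ)+1:ℕ))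
          = ∑' (k:ℕ), Sf ν a g (s+1+(k:ℤ)) / p (s+1+(k:ℤ)) := by
        apply tsum_congr
        intro k
        rw [show s + (((k:ℕ)+1:ℕ):ℤ) = s+1+(k:ℤ) from by push_cast; ring]
      rw [e4, show s + ((0:ℕ):ℤ) = s from by push_cast; ring] at hshift
      rw [nbl, e1, e2, hshift]
      field_simp
      ring
    have hNt : ∀ u : ℤ, a ≤ u → nsum (1-ν) (a-1) (fun s => p s * nbl y s) u
        = -∑ τ ∈ Finset.Icc (a+1) u, g τ := by
      intro u hu
      rw [nsum_eq]
      have e5 : ∀ s ∈ Finset.Icc a u, cc (1-ν) ((u-s).toNat) * (p s * nbl y s)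
          = -(cc (1-ν) ((u-s).toNat) * Sf ν a g s) := by
        intro s hsm
        simp only [Finset.mem_Icc] at hsm
        rw [hhS s hsm.1]; ring
      rw [Finset.sum_congr rfl e5, Finset.sum_neg_distrib, hconv' u]
    intro t ht
    unfold ndiff
    rw [nbl, hNt t (by omega), hNt (t-1) (by omega)]
    rw [show (∑ τ ∈ Finset.Icc (a+1) t, g τ)
        = (∑ τ ∈ Finset.Icc (a+1) (t-1), g τ) + g t from by
      have e6 := Icc_sum_succ (a+1) (t-1) (by omega) g
      rw [show t - 1 + 1 = t from by ring] at e6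
      exact e6]
    have hgt : g t = q t * y (t-1) - f t := by rw [hgdef]
    linarith [hgt]
end
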